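/- Let B be a connected building set on S = {1, …, n+1}. Suppose that for all I_1, I_2 ∈ B with I_1 ∩ I_2 ≠ ∅, I_1 ⊄ I_2 and I_2 ⊄ I_1, at least one of the following holds: (i) I_1 ∩ I_2 ∈ B; (ii) I_1 ∪ I_2 = S and |(B|_{I_1 ∩ I_2})_max| ≤ 2. Then for every nested set N of B, every pair of distinct I_1, I_2 ∈ B \ {S} such that N ∪ {I_1} and N ∪ {I_2} are both maximal nested sets of B, and every family of integers (a_J)_{J ∈ N} satisfying e_{I_1} + e_{I_2} + Σ_{J ∈ N} a_J e_J = 0 in ℝ^n, one has 2 + Σ_{J ∈ N} a_J ≥ 0. -/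

import Mathlib

/-- A building set on a nonempty finite set `S`: a finite set of nonempty subsets of `S`
closed under unions of intersecting members, and containing all singletons. -/
def IsBuilding (S : Finset ℕ) (B : Finset (Finset ℕ)) : Prop :=
  (∀ I ∈ B, I ⊆ S ∧ I.Nonempty) ∧
  (∀ I ∈ B, ∀ J ∈ B, (I ∩ J).Nonempty → I ∪ J ∈ B) ∧
  (∀ i ∈ S, ({i} : Finset ℕ) ∈ B)

/-- The set of maximal (by inclusion) elements of `B`. -/
def Bmax (B : Finset (Finset ℕ)) : Finset (Finset ℕ) :=
  B.filter (fun I => ∀ J ∈ B, I ⊆ J → I = J)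

/-- The restriction `B|_C = {I ∈ B : I ⊆ C}`. -/
def restrict (B : Finset (Finset ℕ)) (C : Finset ℕ) : Finset (Finset ℕ) :=
  B.filter (fun I => I ⊆ C)

/-- `N` is a nested set of `B`: a subset of `B \ Bmax B` whose members are pairwise
nested or disjoint, such that no union of `k ≥ 2` pairwise disjoint members lies in `B`. -/
def IsNested (B N : Finset (Finset ℕ)) : Prop :=
  N ⊆ B \ Bmax B ∧
  (∀ I ∈ N, ∀ J ∈ N, I ⊆ J ∨ J ⊆ I ∨ I ∩ J = ∅) ∧
  (∀ F ⊆ N, 2 ≤ F.card → (∀ I ∈ F, ∀ J ∈ F, I ≠ J → I ∩ J = ∅) → F.sup id ∉ B)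

/-- `N` is a maximal (by inclusion) nested set of `B`. -/
def MaxNested (B N : Finset (Finset ℕ)) : Prop :=
  IsNested B N ∧ ∀ N' : Finset (Finset ℕ), IsNested B N' → N ⊆ N' → N = N'

/-- For `S = {1, …, n+1}`: `eVec n i` is the `i`-th standard basis vector of `ℝ^n`
for `1 ≤ i ≤ n`, and `eVec n (n+1) = -e_1 - ⋯ - e_n`. -/
def eVec (n : ℕ) (i : ℕ) : Fin n → ℝ :=
  fun j => if i = (j : ℕ) + 1 then 1 else if i = n + 1 then -1 else 0

/-- `eSet n I = ∑ i ∈ I, e_i`. -/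
def eSet (n : ℕ) (I : Finset ℕ) : Fin n → ℝ := ∑ i ∈ I, eVec n i

section AuxLemmas

lemma eSet_apply (n : ℕ) (J : Finset ℕ) (j : Fin n) :
    eSet n J j = (if (j : ℕ) + 1 ∈ J then (1:ℝ) else 0) - (if n + 1 ∈ J then (1:ℝ) else 0) := by
  have hjn : (j : ℕ) + 1 ≠ n + 1 := by have := j.isLt; omega
  unfold eSet eVec
  rw [Finset.sum_apply]
  have h : ∀ i ∈ J, (if i = (j : ℕ) + 1 then (1:ℝ) else if i = n + 1 then -1 else 0)
      = (if i = (j : ℕ) + 1 then (1:ℝ) else 0) + (if i = n + 1 then (-1:ℝ) else 0) := by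
    intro i _
    by_cases h1 : i = (j : ℕ) + 1
    · subst h1; simp [hjn, Nat.ne_of_lt j.isLt]
    · have hjn' : n ≠ (j : ℕ) := by have := j.isLt; omega
      by_cases h2 : i = n + 1 <;> simp [h1, h2, hjn']
  rw [Finset.sum_congr rfl h, Finset.sum_add_distrib]
  rw [Finset.sum_ite_eq' J ((j : ℕ) + 1) (fun _ => (1:ℝ)),
    Finset.sum_ite_eq' J (n + 1) (fun _ => (-1:ℝ))]
  by_cases h1 : (j : ℕ) + 1 ∈ J <;> by_cases h2 : n + 1 ∈ J <;> simp [h1, h2]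

lemma eSet_S (n : ℕ) : eSet n (Finset.Icc 1 (n + 1)) = 0 := by
  funext j
  have hj : (j : ℕ) + 1 ∈ Finset.Icc 1 (n + 1) := by
    simp only [Finset.mem_Icc]; have := j.isLt; omega
  have hn : n + 1 ∈ Finset.Icc 1 (n + 1) := by simp
  rw [eSet_apply]; simp [hj, hn]

lemma eSet_sup (n : ℕ) (F : Finset (Finset ℕ))
    (hdisj : ∀ I ∈ F, ∀ J ∈ F, I ≠ J → I ∩ J = ∅) :
    eSet n (F.sup id) = ∑ K ∈ F, eSet n K := by
  classical
  have hpd : Set.PairwiseDisjoint (↑F) (id : Finset ℕ → Finset ℕ) := by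
    intro x hx y hy hxy
    have := hdisj x (by simpa using hx) y (by simpa using hy) hxy
    simpa [Function.onFun, Finset.disjoint_iff_inter_eq_empty] using this
  rw [Finset.sup_eq_biUnion]
  unfold eSet
  rw [Finset.sum_biUnion hpd]
  rfl

lemma eSet_union_inter (n : ℕ) (I J : Finset ℕ) :
    eSet n (I ∪ J) + eSet n (I ∩ J) = eSet n I + eSet n J := by
  unfold eSet
  exact Finset.sum_union_inter

/-- every element of a finite family lies below a maximal one -/
lemma exists_maximal_above (T : Finset (Finset ℕ)) {J : Finset ℕ} (hJ : J ∈ T) :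
    ∃ K ∈ T, J ⊆ K ∧ ∀ L ∈ T, K ⊆ L → K = L := by
  classical
  obtain ⟨K, hK, hKmax'⟩ := Finset.exists_maximal (s := T.filter (fun X => J ⊆ X))
    ⟨J, by simp [hJ]⟩
  have hKmax : ∀ L ∈ T.filter (fun X => J ⊆ X), ¬ K < L :=
    fun L hL hlt => hlt.not_ge (hKmax' hL hlt.le)
  simp only [Finset.mem_filter] at hK
  refine ⟨K, hK.1, hK.2, ?_⟩
  intro L hL hKL
  by_contra hne
  exact hKmax L (by simp [hL, hK.2.trans hKL]) (lt_of_le_of_ne hKL hne)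

/-- key covering lemma: a nonempty `A ∈ B` cannot be covered by members of a
nested set properly contained in it. -/
lemma exists_pt_nested (B M : Finset (Finset ℕ)) (hM : IsNested B M)
    (A : Finset ℕ) (hA : A ∈ B) (hAne : A.Nonempty) :
    ∃ i ∈ A, ∀ J ∈ M, J ⊂ A → i ∉ J := by
  classical
  by_contra hcon
  push_neg at hcon
  set T := M.filter (fun X => X ⊂ A) with hT
  set F := T.filter (fun K => ∀ L ∈ T, K ⊆ L → K = L) with hF
  -- F covers A
  have hcover : ∀ i ∈ A, ∃ K ∈ F, i ∈ K := by
    intro i hi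
    obtain ⟨J, hJM, hJA, hiJ⟩ := hcon i hi
    have hJT : J ∈ T := by simp [hT, hJM, hJA]
    obtain ⟨K, hKT, hJK, hKmax⟩ := exists_maximal_above T hJT
    exact ⟨K, Finset.mem_filter.2 ⟨hKT, hKmax⟩, hJK hiJ⟩
  have hFM : F ⊆ M := by
    intro K hK
    simp only [hF, hT, Finset.mem_filter] at hK
    exact hK.1.1
  -- F is pairwise disjoint
  have hFdisj : ∀ I ∈ F, ∀ J ∈ F, I ≠ J → I ∩ J = ∅ := by
    intro X hX Y hY hXY
    by_contra hint
    rcases hM.2.1 X (hFM hX) Y (hFM hY) with h | h | h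
    · simp only [hF, Finset.mem_filter] at hX hY
      exact hXY (hX.2 Y hY.1 h)
    · simp only [hF, Finset.mem_filter] at hX hY
      exact hXY (hY.2 X hX.1 h).symm
    · exact hint h
  -- sup F = A
  have hsub : F.sup id ⊆ A := by
    intro i hi
    obtain ⟨K, hK, hiK⟩ := Finset.mem_sup.1 hi
    simp only [hF, hT, Finset.mem_filter] at hK
    exact hK.1.2.1 hiK
  have hsup : F.sup id = A := by
    apply Finset.Subset.antisymm hsub
    intro i hi
    obtain ⟨K, hK, hiK⟩ := hcover i hi
    exact Finset.mem_sup.2 ⟨K, hK, hiK⟩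
  -- card F ≥ 2
  have hFne : F.Nonempty := by
    obtain ⟨i, hi⟩ := hAne
    obtain ⟨K, hK, _⟩ := hcover i hi
    exact ⟨K, hK⟩
  have hcard : 2 ≤ F.card := by
    obtain ⟨K, hK⟩ := hFne
    by_contra hlt
    push_neg at hlt
    have h1 : F.card ≤ 1 := by omega
    have huniq := Finset.card_le_one.1 h1
    have hFK : F = {K} := Finset.eq_singleton_iff_unique_mem.2 ⟨hK, fun x hx => huniq x hx K hK⟩
    have hsupK : F.sup id = K := by rw [hFK]; simp
    have hKA : K = A := by rw [← hsupK, hsup]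
    have hKT : K ∈ T := Finset.mem_filter.1 (by rw [hF] at hK; exact hK) |>.1
    have : K ⊂ A := (Finset.mem_filter.1 hKT).2
    exact (ne_of_lt this) hKA
  exact hM.2.2 F hFM hcard hFdisj (hsup ▸ hA)

/-- evaluation of a vanishing combination at coordinate `i` -/
lemma eval_eq (n : ℕ) (M : Finset (Finset ℕ)) (c : Finset ℕ → ℝ)
    (h : ∑ J ∈ M, c J • eSet n J = 0) (i : ℕ) (h1 : 1 ≤ i) (h2 : i ≤ n + 1) :
    ∑ J ∈ M, c J * ((if i ∈ J then (1:ℝ) else 0) - (if n + 1 ∈ J then (1:ℝ) else 0)) = 0 := by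
  rcases Nat.lt_or_ge i (n + 1) with hlt | hge
  · set j : Fin n := ⟨i - 1, by omega⟩ with hj
    have hji : (j : ℕ) + 1 = i := by simp [hj]; omega
    have := congrFun h j
    rw [Finset.sum_apply] at this
    simp only [Pi.smul_apply, Pi.zero_apply, smul_eq_mul] at this
    calc ∑ J ∈ M, c J * ((if i ∈ J then (1:ℝ) else 0) - (if n + 1 ∈ J then (1:ℝ) else 0))
        = ∑ x ∈ M, c x * eSet n x j := by
          apply Finset.sum_congr rfl
          intro J _
          rw [eSet_apply n J j, hji]
      _ = 0 := this
  · have hi : i = n + 1 := by omega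
    subst hi
    simp

/-- linear independence of the vectors of a nested set -/
lemma nested_indep (n : ℕ) (B : Finset (Finset ℕ))
    (hB : IsBuilding (Finset.Icc 1 (n + 1)) B)
    (hconn : Bmax B = {Finset.Icc 1 (n + 1)}) :
    ∀ M : Finset (Finset ℕ), IsNested B M → ∀ c : Finset ℕ → ℝ,
      (∑ J ∈ M, c J • eSet n J = 0) → ∀ J ∈ M, c J = 0 := by
  classical
  have hSB : Finset.Icc 1 (n + 1) ∈ B := by
    have : Finset.Icc 1 (n + 1) ∈ Bmax B := by rw [hconn]; simp
    exact (Finset.mem_filter.1 this).1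
  have hSne : (Finset.Icc 1 (n + 1)).Nonempty := ⟨1, by simp⟩
  intro M
  induction M using Finset.strongInduction with
  | _ M ih =>
    intro hM c hc J hJ
    -- facts about M
    have hMB : ∀ X ∈ M, X ∈ B ∧ X ≠ Finset.Icc 1 (n + 1) := by
      intro X hX
      have := hM.1 hX
      rw [Finset.mem_sdiff] at this
      refine ⟨this.1, ?_⟩
      intro hXS
      apply this.2
      rw [hconn, hXS]; simp
    -- a point outside all members of M
    obtain ⟨istar, histar, histar2⟩ := exists_pt_nested B M hM _ hSB hSne
    have histarM : ∀ X ∈ M, istar ∉ X := by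
      intro X hX
      apply histar2 X hX
      have h1 := (hB.1 X (hMB X hX).1).1
      exact lt_of_le_of_ne h1 (hMB X hX).2
    -- pick a maximal element J₀ of M
    have hMne : M.Nonempty := ⟨J, hJ⟩
    obtain ⟨J₀, hJ₀M, hJ₀sub, hJ₀max⟩ := exists_maximal_above M hJ
    -- a point of J₀ in no other member
    obtain ⟨i₀, hi₀, hi₀2⟩ := exists_pt_nested B M hM J₀ (hMB J₀ hJ₀M).1
      (hB.1 J₀ (hMB J₀ hJ₀M).1).2
    have hi₀only : ∀ X ∈ M, i₀ ∈ X → X = J₀ := by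
      intro X hX hiX
      by_contra hne
      rcases hM.2.1 X hX J₀ hJ₀M with h | h | h
      · exact hi₀2 X hX (lt_of_le_of_ne h hne) hiX
      · exact hne ((hJ₀max X hX h).symm)
      · have : i₀ ∈ X ∩ J₀ := Finset.mem_inter.2 ⟨hiX, hi₀⟩
        rw [h] at this; exact absurd this (Finset.notMem_empty i₀)
    -- ranges for evaluation
    have hi₀S : i₀ ∈ Finset.Icc 1 (n + 1) := (hB.1 J₀ (hMB J₀ hJ₀M).1).1 hi₀
    rw [Finset.mem_Icc] at hi₀S histar
    -- c J₀ = 0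
    have h1 := eval_eq n M c hc i₀ hi₀S.1 hi₀S.2
    have h2 := eval_eq n M c hc istar histar.1 histar.2
    have h3 : ∑ X ∈ M, c X * (if i₀ ∈ X then (1:ℝ) else 0) = 0 := by
      have h12 : ∑ X ∈ M, (c X * ((if i₀ ∈ X then (1:ℝ) else 0) - (if n + 1 ∈ X then (1:ℝ) else 0))
          - c X * ((if istar ∈ X then (1:ℝ) else 0) - (if n + 1 ∈ X then (1:ℝ) else 0))) = 0 := by
        rw [Finset.sum_sub_distrib, h1, h2, sub_zero]
      have hterm : ∀ X ∈ M, (c X * ((if i₀ ∈ X then (1:ℝ) else 0) - (if n + 1 ∈ X then (1:ℝ) else 0))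
          - c X * ((if istar ∈ X then (1:ℝ) else 0) - (if n + 1 ∈ X then (1:ℝ) else 0)))
          = c X * (if i₀ ∈ X then (1:ℝ) else 0) := by
        intro X hX
        rw [if_neg (histarM X hX)]
        ring
      rw [Finset.sum_congr rfl hterm] at h12
      exact h12
    have hcJ₀ : c J₀ = 0 := by
      have : ∀ X ∈ M, c X * (if i₀ ∈ X then (1:ℝ) else 0)
          = if X = J₀ then c X else 0 := by
        intro X hX
        by_cases hiX : i₀ ∈ X
        · rw [hi₀only X hX hiX]; simp [hi₀only X hX hiX ▸ hiX]
        · have : X ≠ J₀ := fun h => hiX (h ▸ hi₀)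
          simp [hiX, this]
      rw [Finset.sum_congr rfl this, Finset.sum_ite_eq' M J₀ c] at h3
      simpa [hJ₀M] using h3
    -- conclude
    by_cases hJJ₀ : J = J₀
    · rw [hJJ₀]; exact hcJ₀
    · -- apply induction to M.erase J₀
      have hsub : M.erase J₀ ⊂ M := Finset.erase_ssubset hJ₀M
      have hnested : IsNested B (M.erase J₀) := by
        refine ⟨fun X hX => hM.1 (Finset.mem_of_mem_erase hX), ?_, ?_⟩
        · intro X hX Y hY
          exact hM.2.1 X (Finset.mem_of_mem_erase hX) Y (Finset.mem_of_mem_erase hY)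
        · intro F hF h2 h3
          exact hM.2.2 F (fun X hX => Finset.mem_of_mem_erase (hF hX)) h2 h3
      have hsum : ∑ X ∈ M.erase J₀, c X • eSet n X = 0 := by
        have h4 : c J₀ • eSet n J₀ + ∑ X ∈ M.erase J₀, c X • eSet n X
            = ∑ X ∈ M, c X • eSet n X :=
          Finset.add_sum_erase M (fun X => c X • eSet n X) hJ₀M
        rw [hc, hcJ₀, zero_smul, zero_add] at h4
        exact h4
      exact ih (M.erase J₀) hsub hnested c hsum J (Finset.mem_erase.2 ⟨hJJ₀, hJ⟩)

lemma tri_symm {X Y : Finset ℕ} (h : X ⊆ Y ∨ Y ⊆ X ∨ X ∩ Y = ∅) :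
    Y ⊆ X ∨ X ⊆ Y ∨ Y ∩ X = ∅ := by
  rcases h with h | h | h
  · exact Or.inr (Or.inl h)
  · exact Or.inl h
  · exact Or.inr (Or.inr (by rw [Finset.inter_comm]; exact h))

lemma mem_of_insert_nested {B M : Finset (Finset ℕ)} {X : Finset ℕ}
    (hmax : MaxNested B M) (h : IsNested B (insert X M)) : X ∈ M := by
  have h2 := hmax.2 _ h (Finset.subset_insert X M)
  rw [h2]
  exact Finset.mem_insert_self X M

lemma pair_insert {M₁ : Finset (Finset ℕ)} {V : Finset ℕ}
    (hp : ∀ X ∈ M₁, ∀ Y ∈ M₁, X ⊆ Y ∨ Y ⊆ X ∨ X ∩ Y = ∅)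
    (hV : ∀ X ∈ M₁, V ⊆ X ∨ X ⊆ V ∨ V ∩ X = ∅) :
    ∀ X ∈ insert V M₁, ∀ Y ∈ insert V M₁, X ⊆ Y ∨ Y ⊆ X ∨ X ∩ Y = ∅ := by
  intro X hX Y hY
  rcases Finset.mem_insert.1 hX with rfl | hX'
  · rcases Finset.mem_insert.1 hY with rfl | hY'
    · exact Or.inl (subset_refl _)
    · exact hV Y hY'
  · rcases Finset.mem_insert.1 hY with rfl | hY'
    · exact tri_symm (hV X hX')
    · exact hp X hX' Y hY'

lemma sum_ite_eq_smul {M : Type*} [AddCommMonoid M] [Module ℝ M]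
    (N : Finset (Finset ℕ)) {K : Finset ℕ} (hK : K ∈ N) (r : ℝ) (v : Finset ℕ → M) :
    ∑ J ∈ N, (if J = K then r else 0) • v J = r • v K := by
  have h : ∀ J ∈ N, (if J = K then r else 0) • v J = if J = K then r • v J else 0 := by
    intro J _; split <;> simp
  rw [Finset.sum_congr rfl h, Finset.sum_ite_eq' N K (fun J => r • v J), if_pos hK]

lemma sum_ite_eq_const (N : Finset (Finset ℕ)) {K : Finset ℕ} (hK : K ∈ N) (r : ℝ) :
    ∑ J ∈ N, (if J = K then r else 0) = r := by
  rw [Finset.sum_ite_eq' N K (fun _ => r), if_pos hK]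

lemma sum_indic_smul {M : Type*} [AddCommMonoid M] [Module ℝ M]
    (N F : Finset (Finset ℕ)) (hF : F ⊆ N) (v : Finset ℕ → M) :
    ∑ J ∈ N, (if J ∈ F then (1:ℝ) else 0) • v J = ∑ J ∈ F, v J := by
  have h : ∀ J ∈ N, (if J ∈ F then (1:ℝ) else 0) • v J = if J ∈ F then v J else 0 := by
    intro J _; split <;> simp
  rw [Finset.sum_congr rfl h, Finset.sum_ite_mem, Finset.inter_eq_right.2 hF]

lemma sum_indic_card (N F : Finset (Finset ℕ)) (hF : F ⊆ N) :
    ∑ J ∈ N, (if J ∈ F then (1:ℝ) else 0) = F.card := by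
  rw [Finset.sum_ite_mem, Finset.inter_eq_right.2 hF, Finset.sum_const, nsmul_eq_mul, mul_one]

lemma eSet_union_disj (n : ℕ) (I J : Finset ℕ) (h : I ∩ J = ∅) :
    eSet n (I ∪ J) = eSet n I + eSet n J := by
  unfold eSet
  exact Finset.sum_union (Finset.disjoint_iff_inter_eq_empty.2 h)

end AuxLemmas

/-- Direction (2) ⇒ (1) of the main theorem, combinatorially: if the building-set
condition holds, every torus-invariant curve has nonnegative anticanonical degree. -/
theorem stmt_1 (n : ℕ) (B : Finset (Finset ℕ))
    (hB : IsBuilding (Finset.Icc 1 (n + 1)) B)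
    (hconn : Bmax B = {Finset.Icc 1 (n + 1)})
    (hcond : ∀ I₁ ∈ B, ∀ I₂ ∈ B, (I₁ ∩ I₂).Nonempty → ¬I₁ ⊆ I₂ → ¬I₂ ⊆ I₁ →
      (I₁ ∩ I₂ ∈ B ∨ (I₁ ∪ I₂ = Finset.Icc 1 (n + 1) ∧
        (Bmax (restrict B (I₁ ∩ I₂))).card ≤ 2)))
    (N : Finset (Finset ℕ)) (hN : IsNested B N)
    (I₁ I₂ : Finset ℕ) (hI₁ : I₁ ∈ B) (hI₂ : I₂ ∈ B) (hne : I₁ ≠ I₂)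
    (hI₁S : I₁ ≠ Finset.Icc 1 (n + 1)) (hI₂S : I₂ ≠ Finset.Icc 1 (n + 1))
    (hmax₁ : MaxNested B (insert I₁ N)) (hmax₂ : MaxNested B (insert I₂ N))
    (a : Finset ℕ → ℤ)
    (heq : eSet n I₁ + eSet n I₂ + ∑ J ∈ N, (a J : ℝ) • eSet n J = 0) :
    0 ≤ 2 + ∑ J ∈ N, a J := by
  classical
  -- reduce to finding an explicit relation with coefficient sum ≥ -2
  suffices h : ∃ bR : Finset ℕ → ℝ,
      (eSet n I₁ + eSet n I₂ + ∑ J ∈ N, bR J • eSet n J = 0) ∧ (-2 ≤ ∑ J ∈ N, bR J) by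
    obtain ⟨bR, hrel, hsum⟩ := h
    have hzero : ∑ J ∈ N, ((a J : ℝ) - bR J) • eSet n J = 0 := by
      have hsub := sub_eq_zero_of_eq (heq.trans hrel.symm)
      rw [show (eSet n I₁ + eSet n I₂ + ∑ J ∈ N, (a J : ℝ) • eSet n J)
          - (eSet n I₁ + eSet n I₂ + ∑ J ∈ N, bR J • eSet n J)
          = ∑ J ∈ N, (a J : ℝ) • eSet n J - ∑ J ∈ N, bR J • eSet n J by abel] at hsub
      rw [← Finset.sum_sub_distrib] at hsub
      rw [← hsub]
      apply Finset.sum_congr rfl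
      intro J _
      rw [sub_smul]
    have hind := nested_indep n B hB hconn N hN _ hzero
    have habR : ∀ J ∈ N, bR J = (a J : ℝ) := by
      intro J hJ
      have := hind J hJ
      linarith
    have hsumeq : ∑ J ∈ N, bR J = ∑ J ∈ N, (a J : ℝ) := Finset.sum_congr rfl habR
    rw [hsumeq] at hsum
    have h4 : ((0:ℤ):ℝ) ≤ ((2 + ∑ J ∈ N, a J : ℤ) : ℝ) := by push_cast; linarith
    exact_mod_cast h4
  -- basic facts
  have hSB : Finset.Icc 1 (n + 1) ∈ B := by
    have : Finset.Icc 1 (n + 1) ∈ Bmax B := by rw [hconn]; exact Finset.mem_singleton_self _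
    exact (Finset.mem_filter.1 this).1
  have hmemsd : ∀ X, X ∈ B → X ≠ Finset.Icc 1 (n + 1) → X ∈ B \ Bmax B := by
    intro X hX hXS
    rw [Finset.mem_sdiff]
    refine ⟨hX, ?_⟩
    rw [hconn]
    simpa using hXS
  have hBne : ∀ X ∈ B, X.Nonempty := fun X hX => (hB.1 X hX).2
  have hBsub : ∀ X ∈ B, X ⊆ Finset.Icc 1 (n + 1) := fun X hX => (hB.1 X hX).1
  have hNB : ∀ J ∈ N, J ∈ B := fun J hJ => (Finset.mem_sdiff.1 (hN.1 hJ)).1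
  have hNne : ∀ J ∈ N, J.Nonempty := fun J hJ => hBne J (hNB J hJ)
  have hpN := hN.2.1
  have hfN := hN.2.2
  have hp₁ := hmax₁.1.2.1
  have hf₁ := hmax₁.1.2.2
  have hp₂ := hmax₂.1.2.1
  have hf₂ := hmax₂.1.2.2
  -- degenerate case : I₁ ∈ N
  by_cases hI₁N : I₁ ∈ N
  · have h1 : insert I₁ N = N := Finset.insert_eq_self.2 hI₁N
    have hI₂N : I₂ ∈ N := by
      have h2 := hmax₁.2 (insert I₂ N) hmax₂.1 (by rw [h1]; exact Finset.subset_insert I₂ N)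
      have : I₂ ∈ insert I₁ N := by rw [h2]; exact Finset.mem_insert_self _ _
      rcases Finset.mem_insert.1 this with h' | h'
      · exact absurd h'.symm hne
      · exact h'
    refine ⟨fun J => (if J = I₁ then (-1:ℝ) else 0) + (if J = I₂ then (-1:ℝ) else 0), ?_, ?_⟩
    · have hterm : ∀ J ∈ N, ((if J = I₁ then (-1:ℝ) else 0) + (if J = I₂ then (-1:ℝ) else 0)) • eSet n J
          = (if J = I₁ then (-1:ℝ) else 0) • eSet n J + (if J = I₂ then (-1:ℝ) else 0) • eSet n J :=
        fun J _ => add_smul _ _ _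
      rw [Finset.sum_congr rfl hterm, Finset.sum_add_distrib,
        sum_ite_eq_smul N hI₁N (-1) (eSet n), sum_ite_eq_smul N hI₂N (-1) (eSet n)]
      simp only [neg_one_smul]
      abel
    · rw [Finset.sum_add_distrib, sum_ite_eq_const N hI₁N (-1), sum_ite_eq_const N hI₂N (-1)]
      norm_num
  -- I₂ ∉ N either
  have hI₂N : I₂ ∉ N := by
    intro hI₂N
    have h1 : insert I₂ N = N := Finset.insert_eq_self.2 hI₂N
    have h2 := hmax₂.2 (insert I₁ N) hmax₁.1 (by rw [h1]; exact Finset.subset_insert I₁ N)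
    have : I₁ ∈ insert I₂ N := by rw [h2]; exact Finset.mem_insert_self _ _
    rcases Finset.mem_insert.1 this with h' | h'
    · exact hne h'
    · exact hI₁N h'
  -- the doubly extended set is not nested
  have hnotnested : ¬ IsNested B (insert I₂ (insert I₁ N)) := by
    intro h
    have hmem := mem_of_insert_nested hmax₁ h
    rcases Finset.mem_insert.1 hmem with h' | h'
    · exact hne h'.symm
    · exact hI₂N h'
  have hC1 : insert I₂ (insert I₁ N) ⊆ B \ Bmax B := by
    intro X hX
    rcases Finset.mem_insert.1 hX with rfl | hX
    · exact hmemsd _ hI₂ hI₂S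
    rcases Finset.mem_insert.1 hX with rfl | hX
    · exact hmemsd _ hI₁ hI₁S
    · exact hN.1 hX
  have hIM : ∀ X ∈ insert I₂ (insert I₁ N), X ∈ B := by
    intro X hX
    exact (Finset.mem_sdiff.1 (hC1 hX)).1
  have t1 : ∀ J ∈ N, J ⊆ I₁ ∨ I₁ ⊆ J ∨ J ∩ I₁ = ∅ :=
    fun J hJ => hp₁ J (Finset.mem_insert_of_mem hJ) I₁ (Finset.mem_insert_self _ _)
  have t2 : ∀ J ∈ N, J ⊆ I₂ ∨ I₂ ⊆ J ∨ J ∩ I₂ = ∅ :=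
    fun J hJ => hp₂ J (Finset.mem_insert_of_mem hJ) I₂ (Finset.mem_insert_self _ _)
  by_cases hpair : I₁ ⊆ I₂ ∨ I₂ ⊆ I₁ ∨ I₁ ∩ I₂ = ∅
  · ------------------------------------------------------------------
    -- CASE A : the pair is compatible, a disjoint family witnesses failure
    ------------------------------------------------------------------
    have hC2 : ∀ X ∈ insert I₂ (insert I₁ N), ∀ Y ∈ insert I₂ (insert I₁ N),
        X ⊆ Y ∨ Y ⊆ X ∨ X ∩ Y = ∅ := by
      intro X hX Y hY
      rcases Finset.mem_insert.1 hX with rfl | hX'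
      · rcases Finset.mem_insert.1 hY with rfl | hY'
        · exact Or.inl (subset_refl _)
        · rcases Finset.mem_insert.1 hY' with rfl | hY''
          · exact tri_symm hpair
          · exact hp₂ X (Finset.mem_insert_self _ _) Y (Finset.mem_insert_of_mem hY'')
      · rcases Finset.mem_insert.1 hY with rfl | hY'
        · rcases Finset.mem_insert.1 hX' with rfl | hX''
          · exact hpair
          · exact tri_symm (hp₂ Y (Finset.mem_insert_self _ _) X (Finset.mem_insert_of_mem hX''))
        · exact hp₁ X hX' Y hY'
    have hC3 : ¬ (∀ F ⊆ insert I₂ (insert I₁ N), 2 ≤ F.card →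
        (∀ X ∈ F, ∀ Y ∈ F, X ≠ Y → X ∩ Y = ∅) → F.sup id ∉ B) :=
      fun h => hnotnested ⟨hC1, hC2, h⟩
    push_neg at hC3
    obtain ⟨F, hFsub, hFcard, hFdisj, hFsup⟩ := hC3
    have hI₂F : I₂ ∈ F := by
      by_contra hcon
      refine hf₁ F (fun X hX => ?_) hFcard hFdisj hFsup
      rcases Finset.mem_insert.1 (hFsub hX) with rfl | h
      · exact absurd hX hcon
      · exact h
    have hI₁F : I₁ ∈ F := by
      by_contra hcon
      refine hf₂ F (fun X hX => ?_) hFcard hFdisj hFsup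
      rcases Finset.mem_insert.1 (hFsub hX) with rfl | h
      · exact Finset.mem_insert_self _ _
      rcases Finset.mem_insert.1 h with rfl | h'
      · exact absurd hX hcon
      · exact Finset.mem_insert_of_mem h'
    -- choose the family with maximal support
    set 𝒜 := ((insert I₂ (insert I₁ N)).powerset).filter (fun F =>
      I₁ ∈ F ∧ I₂ ∈ F ∧ (∀ X ∈ F, ∀ Y ∈ F, X ≠ Y → X ∩ Y = ∅) ∧ F.sup id ∈ B) with h𝒜
    have hF𝒜 : F ∈ 𝒜 := by
      rw [h𝒜, Finset.mem_filter, Finset.mem_powerset]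
      exact ⟨hFsub, hI₁F, hI₂F, hFdisj, hFsup⟩
    obtain ⟨Fm, hFm𝒜, hFmmax⟩ := Finset.exists_max_image 𝒜 (fun F => (F.sup id).card) ⟨F, hF𝒜⟩
    rw [h𝒜, Finset.mem_filter, Finset.mem_powerset] at hFm𝒜
    obtain ⟨hFmsub, hI₁Fm, hI₂Fm, hFmdisj, hFmB⟩ := hFm𝒜
    have hVB : Fm.sup id ∈ B := hFmB
    have hI₁V : I₁ ⊆ Fm.sup id := Finset.le_sup (f := id) hI₁Fm
    have hI₂V : I₂ ⊆ Fm.sup id := Finset.le_sup (f := id) hI₂Fm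
    have hF₀N : (Fm.erase I₁).erase I₂ ⊆ N := by
      intro X hX
      have hXne2 : X ≠ I₂ := (Finset.mem_erase.1 hX).1
      have hX1 := Finset.mem_of_mem_erase hX
      have hXne1 : X ≠ I₁ := (Finset.mem_erase.1 hX1).1
      have := hFmsub (Finset.mem_of_mem_erase hX1)
      rcases Finset.mem_insert.1 this with h | h
      · exact absurd h hXne2
      rcases Finset.mem_insert.1 h with h' | h'
      · exact absurd h' hXne1
      · exact h'
    have hI₂e : I₂ ∈ Fm.erase I₁ := Finset.mem_erase.2 ⟨fun h => hne h.symm, hI₂Fm⟩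
    have hFmdecomp : insert I₁ (insert I₂ ((Fm.erase I₁).erase I₂)) = Fm := by
      rw [Finset.insert_erase hI₂e, Finset.insert_erase hI₁Fm]
    have hI₁notin : I₁ ∉ insert I₂ ((Fm.erase I₁).erase I₂) := by
      intro h
      rcases Finset.mem_insert.1 h with h' | h'
      · exact hne h'
      · exact (Finset.mem_erase.1 (Finset.mem_of_mem_erase h')).1 rfl
    have hI₂notin : I₂ ∉ (Fm.erase I₁).erase I₂ := fun h => (Finset.mem_erase.1 h).1 rfl
    have hdecompsum : eSet n (Fm.sup id) =
        eSet n I₁ + eSet n I₂ + ∑ K ∈ (Fm.erase I₁).erase I₂, eSet n K := by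
      rw [eSet_sup n Fm hFmdisj]
      conv_lhs => rw [← hFmdecomp]
      rw [Finset.sum_insert hI₁notin, Finset.sum_insert hI₂notin]
      abel
    -- V is in N or is everything
    have hVa : Fm.sup id = Finset.Icc 1 (n + 1) ∨ Fm.sup id ∈ N := by
      by_cases hVS : Fm.sup id = Finset.Icc 1 (n + 1)
      · exact Or.inl hVS
      right
      have cV : ∀ J ∈ N, Fm.sup id ⊆ J ∨ J ⊆ Fm.sup id ∨ Fm.sup id ∩ J = ∅ := by
        intro J hJ
        by_cases h1 : J ⊆ Fm.sup id
        · exact Or.inr (Or.inl h1)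
        by_cases h2 : Fm.sup id ⊆ J
        · exact Or.inl h2
        right; right
        by_cases hdisj : Fm.sup id ∩ J = ∅
        · exact hdisj
        exfalso
        have hnJK : ∀ K ∈ Fm, ¬ J ⊆ K := by
          intro K hK hJK
          exact h1 (hJK.trans (Finset.le_sup (f := id) hK))
        have htriK : ∀ K ∈ Fm, K ⊆ J ∨ K ∩ J = ∅ := by
          intro K hK
          have hKmem := hFmsub hK
          have htri : K ⊆ J ∨ J ⊆ K ∨ K ∩ J = ∅ := by
            rcases Finset.mem_insert.1 hKmem with rfl | h
            · exact tri_symm (t2 J hJ)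
            rcases Finset.mem_insert.1 h with rfl | h'
            · exact tri_symm (t1 J hJ)
            · exact hpN K h' J hJ
          rcases htri with h | h | h
          · exact Or.inl h
          · exact absurd h (hnJK K hK)
          · exact Or.inr h
        obtain ⟨x, hx⟩ := Finset.nonempty_iff_ne_empty.2 hdisj
        have hxV := (Finset.mem_inter.1 hx).1
        have hxJ := (Finset.mem_inter.1 hx).2
        have hJB : J ∈ B := hNB J hJ
        have hJV : J ∪ Fm.sup id ∈ B :=
          hB.2.1 J hJB (Fm.sup id) hVB ⟨x, Finset.mem_inter.2 ⟨hxJ, hxV⟩⟩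
        -- the disjoint part D
        set D := Fm.filter (fun K => K ∩ J = ∅) with hD
        have hDsup : J ⊔ D.sup id = J ∪ Fm.sup id := by
          apply Finset.Subset.antisymm
          · rw [Finset.sup_eq_union]
            apply Finset.union_subset Finset.subset_union_left
            intro y hy
            obtain ⟨K, hK, hyK⟩ := Finset.mem_sup.1 hy
            have hKFm : K ∈ Fm := (Finset.mem_filter.1 hK).1
            exact Finset.mem_union_right _ (Finset.le_sup (f := id) hKFm hyK)
          · rw [Finset.sup_eq_union]
            apply Finset.union_subset Finset.subset_union_left
            intro y hy
            obtain ⟨K, hK, hyK⟩ := Finset.mem_sup.1 hy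
            rcases htriK K hK with h | h
            · exact Finset.mem_union_left _ (h hyK)
            · have hKD : K ∈ D := by rw [hD]; exact Finset.mem_filter.2 ⟨hK, h⟩
              exact Finset.mem_union_right _ (Finset.le_sup (f := id) hKD hyK)
        -- some K₁ ∈ D
        have hK₁ : ∃ K₁ ∈ Fm, K₁ ∩ J = ∅ := by
          have hnall : ¬ ∀ K ∈ Fm, K ⊆ J := by
            intro hall
            apply h2
            intro y hy
            obtain ⟨K, hK, hyK⟩ := Finset.mem_sup.1 hy
            exact hall K hK hyK
          push_neg at hnall
          obtain ⟨K₁, hK₁Fm, hK₁J⟩ := hnall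
          exact ⟨K₁, hK₁Fm, (htriK K₁ hK₁Fm).resolve_left hK₁J⟩
        obtain ⟨K₁, hK₁Fm, hK₁dJ⟩ := hK₁
        have hK₁D : K₁ ∈ D := Finset.mem_filter.2 ⟨hK₁Fm, hK₁dJ⟩
        have hJD : J ∉ D := by
          intro h
          have h' := (Finset.mem_filter.1 h).2
          rw [Finset.inter_self] at h'
          exact (hNne J hJ).ne_empty h'
        -- the new family insert J D
        have hHdisj : ∀ X ∈ insert J D, ∀ Y ∈ insert J D, X ≠ Y → X ∩ Y = ∅ := by
          intro X hX Y hY hXY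
          rcases Finset.mem_insert.1 hX with rfl | hX'
          · rcases Finset.mem_insert.1 hY with rfl | hY'
            · exact absurd rfl hXY
            · rw [Finset.inter_comm]; exact (Finset.mem_filter.1 hY').2
          · rcases Finset.mem_insert.1 hY with rfl | hY'
            · exact (Finset.mem_filter.1 hX').2
            · exact hFmdisj X (Finset.mem_filter.1 hX').1 Y (Finset.mem_filter.1 hY').1 hXY
        have hHcard : 2 ≤ (insert J D).card := by
          have h1' : D.Nonempty := ⟨K₁, hK₁D⟩
          rw [Finset.card_insert_of_notMem hJD]
          have := Finset.card_pos.2 h1'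
          omega
        have hHsup : (insert J D).sup id ∈ B := by
          rw [Finset.sup_insert]
          show J ⊔ D.sup id ∈ B
          rw [hDsup]
          exact hJV
        have hDfm : ∀ K ∈ D, K ∈ Fm := fun K hK => (Finset.mem_filter.1 hK).1
        -- case analysis on the positions of I₁, I₂
        rcases htriK I₁ hI₁Fm with hI₁J | hI₁dJ
        · rcases htriK I₂ hI₂Fm with hI₂J | hI₂dJ
          · -- both inside J : insert J D ⊆ N
            refine hfN (insert J D) ?_ hHcard hHdisj hHsup
            intro X hX
            rcases Finset.mem_insert.1 hX with rfl | hX'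
            · exact hJ
            have hXd := (Finset.mem_filter.1 hX').2
            rcases Finset.mem_insert.1 (hFmsub (hDfm X hX')) with rfl | h
            · exfalso
              obtain ⟨y, hy⟩ := hBne _ hI₂
              exact Finset.notMem_empty y (hXd ▸ Finset.mem_inter.2 ⟨hy, hI₂J hy⟩)
            rcases Finset.mem_insert.1 h with rfl | h'
            · exfalso
              obtain ⟨y, hy⟩ := hBne _ hI₁
              exact Finset.notMem_empty y (hXd ▸ Finset.mem_inter.2 ⟨hy, hI₁J hy⟩)
            · exact h'
          · -- I₁ ⊆ J, I₂ ∩ J = ∅ : family inside insert I₂ N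
            refine hf₂ (insert J D) ?_ hHcard hHdisj hHsup
            intro X hX
            rcases Finset.mem_insert.1 hX with rfl | hX'
            · exact Finset.mem_insert_of_mem hJ
            have hXd := (Finset.mem_filter.1 hX').2
            rcases Finset.mem_insert.1 (hFmsub (hDfm X hX')) with rfl | h
            · exact Finset.mem_insert_self _ _
            rcases Finset.mem_insert.1 h with rfl | h'
            · exfalso
              obtain ⟨y, hy⟩ := hBne _ hI₁
              exact Finset.notMem_empty y (hXd ▸ Finset.mem_inter.2 ⟨hy, hI₁J hy⟩)
            · exact Finset.mem_insert_of_mem h'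
        · rcases htriK I₂ hI₂Fm with hI₂J | hI₂dJ
          · -- I₂ ⊆ J, I₁ ∩ J = ∅ : family inside insert I₁ N
            refine hf₁ (insert J D) ?_ hHcard hHdisj hHsup
            intro X hX
            rcases Finset.mem_insert.1 hX with rfl | hX'
            · exact Finset.mem_insert_of_mem hJ
            have hXd := (Finset.mem_filter.1 hX').2
            rcases Finset.mem_insert.1 (hFmsub (hDfm X hX')) with rfl | h
            · exfalso
              obtain ⟨y, hy⟩ := hBne _ hI₂
              exact Finset.notMem_empty y (hXd ▸ Finset.mem_inter.2 ⟨hy, hI₂J hy⟩)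
            rcases Finset.mem_insert.1 h with rfl | h'
            · exact Finset.mem_insert_self _ _
            · exact Finset.mem_insert_of_mem h'
          · -- both disjoint from J : a bigger family, contradiction with maximality
            have hI₁D : I₁ ∈ D := Finset.mem_filter.2 ⟨hI₁Fm, hI₁dJ⟩
            have hI₂D : I₂ ∈ D := Finset.mem_filter.2 ⟨hI₂Fm, hI₂dJ⟩
            have hnew : insert J D ∈ 𝒜 := by
              rw [h𝒜, Finset.mem_filter, Finset.mem_powerset]
              refine ⟨?_, Finset.mem_insert_of_mem hI₁D, Finset.mem_insert_of_mem hI₂D, hHdisj, hHsup⟩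
              intro X hX
              rcases Finset.mem_insert.1 hX with rfl | hX'
              · exact Finset.mem_insert_of_mem (Finset.mem_insert_of_mem hJ)
              · exact hFmsub (hDfm X hX')
            have hle := hFmmax _ hnew
            have hlt : (Fm.sup id).card < ((insert J D).sup id).card := by
              apply Finset.card_lt_card
              constructor
              · intro y hy
                obtain ⟨K, hK, hyK⟩ := Finset.mem_sup.1 hy
                rcases htriK K hK with h | h
                · exact Finset.mem_sup.2 ⟨J, Finset.mem_insert_self _ _, h hyK⟩
                · exact Finset.mem_sup.2 ⟨K, Finset.mem_insert_of_mem (Finset.mem_filter.2 ⟨hK, h⟩), hyK⟩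
              · intro hcon
                obtain ⟨y, hyJ, hyV⟩ : ∃ y ∈ J, y ∉ Fm.sup id := by
                  by_contra hcc
                  push_neg at hcc
                  exact h1 hcc
                exact hyV (hcon (Finset.mem_sup.2 ⟨J, Finset.mem_insert_self _ _, hyJ⟩))
            omega
      -- V is compatible : nestedness of insert V (insert I₁ N)
      have hnest : IsNested B (insert (Fm.sup id) (insert I₁ N)) := by
        refine ⟨?_, ?_, ?_⟩
        · intro X hX
          rcases Finset.mem_insert.1 hX with rfl | hX'
          · exact hmemsd _ hVB hVS
          rcases Finset.mem_insert.1 hX' with rfl | hX''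
          · exact hmemsd _ hI₁ hI₁S
          · exact hN.1 hX''
        · apply pair_insert hp₁
          intro X hX
          rcases Finset.mem_insert.1 hX with rfl | hX'
          · exact Or.inr (Or.inl hI₁V)
          · exact cV X hX'
        · intro G hG hGcard hGdisj hGB
          have hVG : Fm.sup id ∈ G := by
            by_contra hcon
            refine hf₁ G (fun X hX => ?_) hGcard hGdisj hGB
            rcases Finset.mem_insert.1 (hG hX) with rfl | h
            · exact absurd hX hcon
            · exact h
          have hG'sub : ∀ X ∈ G.erase (Fm.sup id), X ∈ insert I₁ N ∧ X ∩ Fm.sup id = ∅ := by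
            intro X hX
            have hXne := (Finset.mem_erase.1 hX).1
            have hXG := Finset.mem_of_mem_erase hX
            refine ⟨?_, hGdisj X hXG _ hVG hXne⟩
            rcases Finset.mem_insert.1 (hG hXG) with rfl | h
            · exact absurd rfl hXne
            · exact h
          have hG'N : ∀ X ∈ G.erase (Fm.sup id), X ∈ N := by
            intro X hX
            rcases Finset.mem_insert.1 (hG'sub X hX).1 with rfl | h
            · exfalso
              obtain ⟨y, hy⟩ := hBne _ hI₁
              exact Finset.notMem_empty y ((hG'sub X hX).2 ▸ Finset.mem_inter.2 ⟨hy, hI₁V hy⟩)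
            · exact h
          have hG'ne : (G.erase (Fm.sup id)).Nonempty := by
            obtain ⟨X, hX, Y, hY, hXY⟩ := Finset.one_lt_card.1 hGcard
            rcases eq_or_ne X (Fm.sup id) with rfl | hXV
            · exact ⟨Y, Finset.mem_erase.2 ⟨fun h => hXY h.symm, hY⟩⟩
            · exact ⟨X, Finset.mem_erase.2 ⟨hXV, hX⟩⟩
          have hnew : Fm ∪ G.erase (Fm.sup id) ∈ 𝒜 := by
            rw [h𝒜, Finset.mem_filter, Finset.mem_powerset]
            refine ⟨?_, Finset.mem_union_left _ hI₁Fm, Finset.mem_union_left _ hI₂Fm, ?_, ?_⟩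
            · intro X hX
              rcases Finset.mem_union.1 hX with h | h
              · exact hFmsub h
              · exact Finset.mem_insert_of_mem (Finset.mem_insert_of_mem (hG'N X h))
            · intro X hX Y hY hXY
              rcases Finset.mem_union.1 hX with hX' | hX' <;> rcases Finset.mem_union.1 hY with hY' | hY'
              · exact hFmdisj X hX' Y hY' hXY
              · apply Finset.eq_empty_of_forall_notMem
                intro y hy
                have hyX := (Finset.mem_inter.1 hy).1
                have hyY := (Finset.mem_inter.1 hy).2
                exact Finset.notMem_empty y ((hG'sub Y hY').2 ▸
                  Finset.mem_inter.2 ⟨hyY, Finset.le_sup (f := id) hX' hyX⟩)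
              · apply Finset.eq_empty_of_forall_notMem
                intro y hy
                have hyX := (Finset.mem_inter.1 hy).1
                have hyY := (Finset.mem_inter.1 hy).2
                exact Finset.notMem_empty y ((hG'sub X hX').2 ▸
                  Finset.mem_inter.2 ⟨hyX, Finset.le_sup (f := id) hY' hyY⟩)
              · exact hGdisj X (Finset.mem_of_mem_erase hX') Y (Finset.mem_of_mem_erase hY') hXY
            · rw [Finset.sup_union]
              have hVe : G.sup id = Fm.sup id ⊔ (G.erase (Fm.sup id)).sup id := by
                conv_lhs => rw [← Finset.insert_erase hVG]
                rw [Finset.sup_insert]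
                rfl
              rw [← hVe]
              exact hGB
          have hle := hFmmax _ hnew
          have hlt : (Fm.sup id).card < ((Fm ∪ G.erase (Fm.sup id)).sup id).card := by
            apply Finset.card_lt_card
            constructor
            · rw [Finset.sup_union, Finset.sup_eq_union]
              exact Finset.subset_union_left
            · intro hcon
              obtain ⟨X₁, hX₁⟩ := hG'ne
              obtain ⟨y, hy⟩ := hNne X₁ (hG'N X₁ hX₁)
              have hyV : y ∉ Fm.sup id := fun h =>
                Finset.notMem_empty y ((hG'sub X₁ hX₁).2 ▸ Finset.mem_inter.2 ⟨hy, h⟩)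
              apply hyV
              apply hcon
              rw [Finset.sup_union]
              exact Finset.mem_union_right _ (Finset.le_sup (f := id) hX₁ hy)
          omega
      have hVM₁ := mem_of_insert_nested hmax₁ hnest
      rcases Finset.mem_insert.1 hVM₁ with h | h
      · exfalso
        obtain ⟨y, hy⟩ := hBne _ hI₂
        have := hFmdisj I₁ hI₁Fm I₂ hI₂Fm hne
        exact Finset.notMem_empty y (this ▸ Finset.mem_inter.2 ⟨h ▸ hI₂V hy, hy⟩)
      · exact h
    -- construct the relation
    refine ⟨fun J => (if J ∈ (Fm.erase I₁).erase I₂ then (1:ℝ) else 0) +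
      (if J = Fm.sup id ∧ Fm.sup id ≠ Finset.Icc 1 (n + 1) then (-1:ℝ) else 0), ?_, ?_⟩
    · have hterm : ∀ J ∈ N, ((if J ∈ (Fm.erase I₁).erase I₂ then (1:ℝ) else 0) +
          (if J = Fm.sup id ∧ Fm.sup id ≠ Finset.Icc 1 (n + 1) then (-1:ℝ) else 0)) • eSet n J
          = (if J ∈ (Fm.erase I₁).erase I₂ then (1:ℝ) else 0) • eSet n J +
            (if J = Fm.sup id ∧ Fm.sup id ≠ Finset.Icc 1 (n + 1) then (-1:ℝ) else 0) • eSet n J :=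
        fun J _ => add_smul _ _ _
      rw [Finset.sum_congr rfl hterm, Finset.sum_add_distrib,
        sum_indic_smul N _ hF₀N (eSet n)]
      by_cases hVS : Fm.sup id = Finset.Icc 1 (n + 1)
      · have : ∀ J ∈ N, (if J = Fm.sup id ∧ Fm.sup id ≠ Finset.Icc 1 (n + 1) then (-1:ℝ) else 0) • eSet n J = 0 := by
          intro J _
          rw [if_neg (by tauto), zero_smul]
        rw [Finset.sum_congr rfl this, Finset.sum_const_zero, add_zero]
        have h0 : eSet n (Fm.sup id) = 0 := by rw [hVS]; exact eSet_S n
        rw [hdecompsum] at h0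
        rw [← h0]
      · have hVN : Fm.sup id ∈ N := hVa.resolve_left hVS
        have : ∀ J ∈ N, (if J = Fm.sup id ∧ Fm.sup id ≠ Finset.Icc 1 (n + 1) then (-1:ℝ) else 0) • eSet n J
            = (if J = Fm.sup id then (-1:ℝ) else 0) • eSet n J := by
          intro J _
          by_cases h : J = Fm.sup id <;> simp [h, hVS]
        rw [Finset.sum_congr rfl this, sum_ite_eq_smul N hVN (-1) (eSet n)]
        rw [neg_one_smul]
        have := hdecompsum
        rw [show eSet n I₁ + eSet n I₂ + (∑ K ∈ (Fm.erase I₁).erase I₂, eSet n K + -eSet n (Fm.sup id))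
          = (eSet n I₁ + eSet n I₂ + ∑ K ∈ (Fm.erase I₁).erase I₂, eSet n K) - eSet n (Fm.sup id) by abel, ← this]
        abel
    · rw [Finset.sum_add_distrib, sum_indic_card N _ hF₀N]
      have h2 : (-1:ℝ) ≤ ∑ J ∈ N, (if J = Fm.sup id ∧ Fm.sup id ≠ Finset.Icc 1 (n + 1) then (-1:ℝ) else 0) := by
        by_cases hVS : Fm.sup id = Finset.Icc 1 (n + 1)
        · have : ∀ J ∈ N, (if J = Fm.sup id ∧ Fm.sup id ≠ Finset.Icc 1 (n + 1) then (-1:ℝ) else 0) = 0 := by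
            intro J _; rw [if_neg (by tauto)]
          rw [Finset.sum_congr rfl this, Finset.sum_const_zero]
          norm_num
        · have hVN : Fm.sup id ∈ N := hVa.resolve_left hVS
          have : ∀ J ∈ N, (if J = Fm.sup id ∧ Fm.sup id ≠ Finset.Icc 1 (n + 1) then (-1:ℝ) else 0)
              = (if J = Fm.sup id then (-1:ℝ) else 0) := by
            intro J _
            by_cases h : J = Fm.sup id <;> simp [h, hVS]
          rw [Finset.sum_congr rfl this, sum_ite_eq_const N hVN (-1)]
      have h3 : (0:ℝ) ≤ (((Fm.erase I₁).erase I₂).card : ℝ) := Nat.cast_nonneg _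
      linarith
  · ------------------------------------------------------------------
    -- CASE B : intersecting incomparable pair
    ------------------------------------------------------------------
    
    push_neg at hpair
    obtain ⟨hn12, hn21, hPne'⟩ := hpair
    have hPne : (I₁ ∩ I₂).Nonempty := hPne'
    have hU₀B : I₁ ∪ I₂ ∈ B := hB.2.1 I₁ hI₁ I₂ hI₂ hPne
    have hPI₁ : I₁ ∩ I₂ ⊆ I₁ := Finset.inter_subset_left
    have hPI₂ : I₁ ∩ I₂ ⊆ I₂ := Finset.inter_subset_right
    have hI₁U : I₁ ⊆ I₁ ∪ I₂ := Finset.subset_union_left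
    have hI₂U : I₂ ⊆ I₁ ∪ I₂ := Finset.subset_union_right
    rcases hcond I₁ hI₁ I₂ hI₂ hPne hn12 hn21 with hPB | ⟨hU₀S, hQ2⟩
    · --------------------------------------------------------------
      -- SUBCASE (i) : I₁ ∩ I₂ ∈ B
      --------------------------------------------------------------
      have hPS : I₁ ∩ I₂ ≠ Finset.Icc 1 (n + 1) := by
        intro h
        exact hI₁S (Finset.Subset.antisymm (hBsub I₁ hI₁) (h ▸ hPI₁))
      have cP : ∀ J ∈ N, (I₁ ∩ I₂) ⊆ J ∨ J ⊆ (I₁ ∩ I₂) ∨ (I₁ ∩ I₂) ∩ J = ∅ := by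
        intro J hJ
        by_cases hd : (I₁ ∩ I₂) ∩ J = ∅
        · exact Or.inr (Or.inr hd)
        obtain ⟨x, hx⟩ := Finset.nonempty_iff_ne_empty.2 hd
        have hxP := (Finset.mem_inter.1 hx).1
        have hxJ := (Finset.mem_inter.1 hx).2
        rcases t1 J hJ with h1 | h1 | h1
        · rcases t2 J hJ with h2 | h2 | h2
          · exact Or.inr (Or.inl (Finset.subset_inter h1 h2))
          · exact Or.inl (hPI₂.trans h2)
          · exact absurd (h2 ▸ Finset.mem_inter.2 ⟨hxJ, hPI₂ hxP⟩) (Finset.notMem_empty x)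
        · exact Or.inl (hPI₁.trans h1)
        · exact absurd (h1 ▸ Finset.mem_inter.2 ⟨hxJ, hPI₁ hxP⟩) (Finset.notMem_empty x)
      -- P belongs to N
      have hPnest : IsNested B (insert (I₁ ∩ I₂) (insert I₁ N)) := by
        refine ⟨?_, ?_, ?_⟩
        · intro X hX
          rcases Finset.mem_insert.1 hX with rfl | hX'
          · exact hmemsd _ hPB hPS
          rcases Finset.mem_insert.1 hX' with rfl | hX''
          · exact hmemsd _ hI₁ hI₁S
          · exact hN.1 hX''
        · apply pair_insert hp₁
          intro X hX
          rcases Finset.mem_insert.1 hX with rfl | hX'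
          · exact Or.inl hPI₁
          · exact cP X hX'
        · intro G hG hGcard hGdisj hGB
          have hPG : (I₁ ∩ I₂) ∈ G := by
            by_contra hcon
            refine hf₁ G (fun X hX => ?_) hGcard hGdisj hGB
            rcases Finset.mem_insert.1 (hG hX) with rfl | h
            · exact absurd hX hcon
            · exact h
          have hG'sub : ∀ X ∈ G.erase (I₁ ∩ I₂), X ∈ N ∧ X ∩ (I₁ ∩ I₂) = ∅ := by
            intro X hX
            have hXne := (Finset.mem_erase.1 hX).1
            have hXG := Finset.mem_of_mem_erase hX
            have hXd : X ∩ (I₁ ∩ I₂) = ∅ := hGdisj X hXG _ hPG hXne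
            refine ⟨?_, hXd⟩
            rcases Finset.mem_insert.1 (hG hXG) with rfl | h
            · exact absurd rfl hXne
            rcases Finset.mem_insert.1 h with rfl | h'
            · exfalso
              obtain ⟨y, hy⟩ := hPne
              exact Finset.notMem_empty y (hXd ▸ Finset.mem_inter.2 ⟨hPI₁ hy, hy⟩)
            · exact h'
          have hclass : ∀ X ∈ G.erase (I₁ ∩ I₂), (X ⊆ I₁ ∧ X ∩ I₂ = ∅) ∨ X ∩ I₁ = ∅ := by
            intro X hX
            obtain ⟨hXN, hXd⟩ := hG'sub X hX
            rcases t1 X hXN with h1 | h1 | h1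
            · rcases t2 X hXN with h2 | h2 | h2
              · exfalso
                obtain ⟨y, hy⟩ := hNne X hXN
                exact Finset.notMem_empty y (hXd ▸ Finset.mem_inter.2
                  ⟨hy, Finset.mem_inter.2 ⟨h1 hy, h2 hy⟩⟩)
              · exfalso
                obtain ⟨y, hy⟩ := hPne
                exact Finset.notMem_empty y (hXd ▸ Finset.mem_inter.2 ⟨h2 (hPI₂ hy), hy⟩)
              · exact Or.inl ⟨h1, h2⟩
            · exfalso
              obtain ⟨y, hy⟩ := hPne
              exact Finset.notMem_empty y (hXd ▸ Finset.mem_inter.2 ⟨h1 (hPI₁ hy), hy⟩)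
            · exact Or.inr h1
          by_cases hcase : ((G.erase (I₁ ∩ I₂)).filter (fun X => X ∩ I₁ = ∅)).Nonempty
          · -- contradiction with hf₁
            have hI₁G₂₃ : I₁ ∉ (G.erase (I₁ ∩ I₂)).filter (fun X => X ∩ I₁ = ∅) := by
              intro h
              have h' := (Finset.mem_filter.1 h).2
              rw [Finset.inter_self] at h'
              exact (hBne I₁ hI₁).ne_empty h'
            refine hf₁ (insert I₁ ((G.erase (I₁ ∩ I₂)).filter (fun X => X ∩ I₁ = ∅))) ?_ ?_ ?_ ?_
            · intro X hX
              rcases Finset.mem_insert.1 hX with rfl | hX'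
              · exact Finset.mem_insert_self _ _
              · exact Finset.mem_insert_of_mem (hG'sub X (Finset.mem_filter.1 hX').1).1
            · rw [Finset.card_insert_of_notMem hI₁G₂₃]
              have := Finset.card_pos.2 hcase
              omega
            · intro X hX Y hY hXY
              rcases Finset.mem_insert.1 hX with rfl | hX'
              · rcases Finset.mem_insert.1 hY with rfl | hY'
                · exact absurd rfl hXY
                · rw [Finset.inter_comm]; exact (Finset.mem_filter.1 hY').2
              · rcases Finset.mem_insert.1 hY with rfl | hY'
                · exact (Finset.mem_filter.1 hX').2
                · exact hGdisj X (Finset.mem_of_mem_erase (Finset.mem_filter.1 hX').1) Y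
                    (Finset.mem_of_mem_erase (Finset.mem_filter.1 hY').1) hXY
            · have hGI₁B : G.sup id ∪ I₁ ∈ B := by
                apply hB.2.1 _ hGB _ hI₁
                obtain ⟨y, hy⟩ := hPne
                exact ⟨y, Finset.mem_inter.2 ⟨Finset.le_sup (f := id) hPG hy, hPI₁ hy⟩⟩
              have heq2 : (insert I₁ ((G.erase (I₁ ∩ I₂)).filter (fun X => X ∩ I₁ = ∅))).sup id
                  = G.sup id ∪ I₁ := by
                apply Finset.Subset.antisymm
                · intro y hy
                  obtain ⟨K, hK, hyK⟩ := Finset.mem_sup.1 hy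
                  rcases Finset.mem_insert.1 hK with rfl | hK'
                  · exact Finset.mem_union_right _ hyK
                  · exact Finset.mem_union_left _ (Finset.le_sup (f := id)
                      (Finset.mem_of_mem_erase (Finset.mem_filter.1 hK').1) hyK)
                · intro y hy
                  rcases Finset.mem_union.1 hy with hy' | hy'
                  · obtain ⟨K, hK, hyK⟩ := Finset.mem_sup.1 hy'
                    rcases eq_or_ne K (I₁ ∩ I₂) with rfl | hKP
                    · exact Finset.mem_sup.2 ⟨I₁, Finset.mem_insert_self _ _, hPI₁ hyK⟩
                    · have hKe : K ∈ G.erase (I₁ ∩ I₂) := Finset.mem_erase.2 ⟨hKP, hK⟩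
                      rcases hclass K hKe with ⟨h1, _⟩ | h1
                      · exact Finset.mem_sup.2 ⟨I₁, Finset.mem_insert_self _ _, h1 hyK⟩
                      · exact Finset.mem_sup.2 ⟨K, Finset.mem_insert_of_mem
                          (Finset.mem_filter.2 ⟨hKe, h1⟩), hyK⟩
                  · exact Finset.mem_sup.2 ⟨I₁, Finset.mem_insert_self _ _, hy'⟩
              rw [heq2]; exact hGI₁B
          · -- all of G' inside I₁ ; contradiction with hf₂
            have hall : ∀ X ∈ G.erase (I₁ ∩ I₂), X ⊆ I₁ ∧ X ∩ I₂ = ∅ := by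
              intro X hX
              rcases hclass X hX with h | h
              · exact h
              · exact absurd ⟨X, Finset.mem_filter.2 ⟨hX, h⟩⟩ hcase
            have hG'ne : (G.erase (I₁ ∩ I₂)).Nonempty := by
              obtain ⟨X, hX, Y, hY, hXY⟩ := Finset.one_lt_card.1 hGcard
              rcases eq_or_ne X (I₁ ∩ I₂) with rfl | hXP
              · exact ⟨Y, Finset.mem_erase.2 ⟨fun h => hXY h.symm, hY⟩⟩
              · exact ⟨X, Finset.mem_erase.2 ⟨hXP, hX⟩⟩
            have hI₂G' : I₂ ∉ G.erase (I₁ ∩ I₂) := fun h => hn21 (hall I₂ h).1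
            refine hf₂ (insert I₂ (G.erase (I₁ ∩ I₂))) ?_ ?_ ?_ ?_
            · intro X hX
              rcases Finset.mem_insert.1 hX with rfl | hX'
              · exact Finset.mem_insert_self _ _
              · exact Finset.mem_insert_of_mem (hG'sub X hX').1
            · rw [Finset.card_insert_of_notMem hI₂G']
              have := Finset.card_pos.2 hG'ne
              omega
            · intro X hX Y hY hXY
              rcases Finset.mem_insert.1 hX with rfl | hX'
              · rcases Finset.mem_insert.1 hY with rfl | hY'
                · exact absurd rfl hXY
                · rw [Finset.inter_comm]; exact (hall Y hY').2
              · rcases Finset.mem_insert.1 hY with rfl | hY'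
                · exact (hall X hX').2
                · exact hGdisj X (Finset.mem_of_mem_erase hX') Y (Finset.mem_of_mem_erase hY') hXY
            · have hGI₂B : G.sup id ∪ I₂ ∈ B := by
                apply hB.2.1 _ hGB _ hI₂
                obtain ⟨y, hy⟩ := hPne
                exact ⟨y, Finset.mem_inter.2 ⟨Finset.le_sup (f := id) hPG hy, hPI₂ hy⟩⟩
              have heq2 : (insert I₂ (G.erase (I₁ ∩ I₂))).sup id = G.sup id ∪ I₂ := by
                apply Finset.Subset.antisymm
                · intro y hy
                  obtain ⟨K, hK, hyK⟩ := Finset.mem_sup.1 hy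
                  rcases Finset.mem_insert.1 hK with rfl | hK'
                  · exact Finset.mem_union_right _ hyK
                  · exact Finset.mem_union_left _ (Finset.le_sup (f := id)
                      (Finset.mem_of_mem_erase hK') hyK)
                · intro y hy
                  rcases Finset.mem_union.1 hy with hy' | hy'
                  · obtain ⟨K, hK, hyK⟩ := Finset.mem_sup.1 hy'
                    rcases eq_or_ne K (I₁ ∩ I₂) with rfl | hKP
                    · exact Finset.mem_sup.2 ⟨I₂, Finset.mem_insert_self _ _, hPI₂ hyK⟩
                    · exact Finset.mem_sup.2 ⟨K, Finset.mem_insert_of_mem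
                        (Finset.mem_erase.2 ⟨hKP, hK⟩), hyK⟩
                  · exact Finset.mem_sup.2 ⟨I₂, Finset.mem_insert_self _ _, hy'⟩
              rw [heq2]; exact hGI₂B
      have hPN : (I₁ ∩ I₂) ∈ N := by
        rcases Finset.mem_insert.1 (mem_of_insert_nested hmax₁ hPnest) with h | h
        · exact absurd (h ▸ hPI₂) hn12
        · exact h
      
      -- the maximal family of N-members disjoint from I₁ ∪ I₂
      set 𝒜 := N.powerset.filter (fun F =>
        (∀ X ∈ F, ∀ Y ∈ F, X ≠ Y → X ∩ Y = ∅) ∧ (∀ K ∈ F, K ∩ (I₁ ∪ I₂) = ∅) ∧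
        (I₁ ∪ I₂) ∪ F.sup id ∈ B) with h𝒜
      have hempty : (∅ : Finset (Finset ℕ)) ∈ 𝒜 := by
        rw [h𝒜, Finset.mem_filter, Finset.mem_powerset]
        refine ⟨Finset.empty_subset _, by simp, by simp, by simpa using hU₀B⟩
      obtain ⟨F₀, hF₀𝒜, hF₀max⟩ := Finset.exists_max_image 𝒜
        (fun F => ((I₁ ∪ I₂) ∪ F.sup id).card) ⟨∅, hempty⟩
      rw [h𝒜, Finset.mem_filter, Finset.mem_powerset] at hF₀𝒜
      obtain ⟨hF₀N, hF₀disj, hF₀dU, hVB⟩ := hF₀𝒜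
      have hI₁V : I₁ ⊆ (I₁ ∪ I₂) ∪ F₀.sup id := hI₁U.trans Finset.subset_union_left
      have hI₂V : I₂ ⊆ (I₁ ∪ I₂) ∪ F₀.sup id := hI₂U.trans Finset.subset_union_left
      have hUsupd : (I₁ ∪ I₂) ∩ F₀.sup id = ∅ := by
        apply Finset.eq_empty_of_forall_notMem
        intro y hy
        obtain ⟨K, hK, hyK⟩ := Finset.mem_sup.1 (Finset.mem_inter.1 hy).2
        exact Finset.notMem_empty y (hF₀dU K hK ▸
          Finset.mem_inter.2 ⟨hyK, (Finset.mem_inter.1 hy).1⟩)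
      have hdecompsum : eSet n ((I₁ ∪ I₂) ∪ F₀.sup id)
          = eSet n (I₁ ∪ I₂) + ∑ K ∈ F₀, eSet n K := by
        rw [eSet_union_disj n _ _ hUsupd, eSet_sup n F₀ hF₀disj]
      have hPsum : eSet n I₁ + eSet n I₂ = eSet n (I₁ ∪ I₂) + eSet n (I₁ ∩ I₂) :=
        (eSet_union_inter n I₁ I₂).symm
      -- V = S or V ∈ N
      have hVa : (I₁ ∪ I₂) ∪ F₀.sup id = Finset.Icc 1 (n + 1) ∨ ((I₁ ∪ I₂) ∪ F₀.sup id) ∈ N := by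
        by_cases hVS : (I₁ ∪ I₂) ∪ F₀.sup id = Finset.Icc 1 (n + 1)
        · exact Or.inl hVS
        right
        have cV : ∀ J ∈ N, ((I₁ ∪ I₂) ∪ F₀.sup id) ⊆ J ∨ J ⊆ ((I₁ ∪ I₂) ∪ F₀.sup id) ∨
            ((I₁ ∪ I₂) ∪ F₀.sup id) ∩ J = ∅ := by
          intro J hJ
          by_cases h1 : J ⊆ (I₁ ∪ I₂) ∪ F₀.sup id
          · exact Or.inr (Or.inl h1)
          by_cases h2 : (I₁ ∪ I₂) ∪ F₀.sup id ⊆ J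
          · exact Or.inl h2
          have hJB := hNB J hJ
          have hJne := hNne J hJ
          have htriK : ∀ K ∈ F₀, K ⊆ J ∨ K ∩ J = ∅ := by
            intro K hK
            rcases hpN K (hF₀N hK) J hJ with h | h | h
            · exact Or.inl h
            · exact absurd (h.trans ((Finset.le_sup (f := id) hK).trans
                Finset.subset_union_right)) h1
            · exact Or.inr h
          rcases t1 J hJ with hJI₁ | hI₁J | hdJ1
          · exact absurd (hJI₁.trans hI₁V) h1
          · -- I₁ ⊆ J forces I₂ ⊆ J ; contradiction with hfN
            exfalso
            have hI₂J : I₂ ⊆ J := by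
              rcases t2 J hJ with h | h | h
              · exact absurd (h.trans hI₂V) h1
              · exact h
              · exfalso
                obtain ⟨y, hy⟩ := hPne
                exact Finset.notMem_empty y (h ▸ Finset.mem_inter.2
                  ⟨hI₁J (hPI₁ hy), hPI₂ hy⟩)
            have hUJ : I₁ ∪ I₂ ⊆ J := Finset.union_subset hI₁J hI₂J
            have hK₁ : ∃ K₁ ∈ F₀, K₁ ∩ J = ∅ := by
              have hnall : ¬ ∀ K ∈ F₀, K ⊆ J := by
                intro hall
                apply h2
                intro y hy
                rcases Finset.mem_union.1 hy with h | h
                · exact hUJ h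
                · obtain ⟨K, hK, hyK⟩ := Finset.mem_sup.1 h
                  exact hall K hK hyK
              push_neg at hnall
              obtain ⟨K₁, hh₁, hh₂⟩ := hnall
              exact ⟨K₁, hh₁, (htriK K₁ hh₁).resolve_left hh₂⟩
            obtain ⟨K₁, hK₁F, hK₁d⟩ := hK₁
            have hJD : J ∉ F₀.filter (fun K => K ∩ J = ∅) := by
              intro h
              have h' := (Finset.mem_filter.1 h).2
              rw [Finset.inter_self] at h'
              exact hJne.ne_empty h'
            refine hfN (insert J (F₀.filter (fun K => K ∩ J = ∅))) ?_ ?_ ?_ ?_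
            · intro X hX
              rcases Finset.mem_insert.1 hX with rfl | hX'
              · exact hJ
              · exact hF₀N (Finset.mem_filter.1 hX').1
            · rw [Finset.card_insert_of_notMem hJD]
              have hK₁mem : K₁ ∈ F₀.filter (fun K => K ∩ J = ∅) :=
                Finset.mem_filter.2 ⟨hK₁F, hK₁d⟩
              have := Finset.card_pos.2 ⟨K₁, hK₁mem⟩
              omega
            · intro X hX Y hY hXY
              rcases Finset.mem_insert.1 hX with rfl | hX'
              · rcases Finset.mem_insert.1 hY with rfl | hY'
                · exact absurd rfl hXY
                · rw [Finset.inter_comm]; exact (Finset.mem_filter.1 hY').2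
              · rcases Finset.mem_insert.1 hY with rfl | hY'
                · exact (Finset.mem_filter.1 hX').2
                · exact hF₀disj X (Finset.mem_filter.1 hX').1 Y (Finset.mem_filter.1 hY').1 hXY
            · have hVJB : ((I₁ ∪ I₂) ∪ F₀.sup id) ∪ J ∈ B := by
                apply hB.2.1 _ hVB _ hJB
                obtain ⟨y, hy⟩ := hBne I₁ hI₁
                exact ⟨y, Finset.mem_inter.2 ⟨hI₁V hy, hI₁J hy⟩⟩
              have heq2 : (insert J (F₀.filter (fun K => K ∩ J = ∅))).sup id
                  = ((I₁ ∪ I₂) ∪ F₀.sup id) ∪ J := by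
                apply Finset.Subset.antisymm
                · intro y hy
                  obtain ⟨K, hK, hyK⟩ := Finset.mem_sup.1 hy
                  rcases Finset.mem_insert.1 hK with rfl | hK'
                  · exact Finset.mem_union_right _ hyK
                  · exact Finset.mem_union_left _ (Finset.mem_union_right _
                      (Finset.le_sup (f := id) (Finset.mem_filter.1 hK').1 hyK))
                · intro y hy
                  rcases Finset.mem_union.1 hy with hy' | hy'
                  · rcases Finset.mem_union.1 hy' with hy'' | hy''
                    · exact Finset.mem_sup.2 ⟨J, Finset.mem_insert_self _ _, hUJ hy''⟩
                    · obtain ⟨K, hK, hyK⟩ := Finset.mem_sup.1 hy''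
                      rcases htriK K hK with h | h
                      · exact Finset.mem_sup.2 ⟨J, Finset.mem_insert_self _ _, h hyK⟩
                      · exact Finset.mem_sup.2 ⟨K, Finset.mem_insert_of_mem
                          (Finset.mem_filter.2 ⟨hK, h⟩), hyK⟩
                  · exact Finset.mem_sup.2 ⟨J, Finset.mem_insert_self _ _, hy'⟩
              rw [heq2]; exact hVJB
          · -- J disjoint from I₁
            have hdJ2 : J ∩ I₂ = ∅ := by
              rcases t2 J hJ with h | h | h
              · exact absurd (h.trans hI₂V) h1
              · exfalso
                obtain ⟨y, hy⟩ := hPne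
                exact Finset.notMem_empty y (hdJ1 ▸ Finset.mem_inter.2 ⟨h (hPI₂ hy), hPI₁ hy⟩)
              · exact h
            by_cases hdV : ((I₁ ∪ I₂) ∪ F₀.sup id) ∩ J = ∅
            · exact Or.inr (Or.inr hdV)
            exfalso
            obtain ⟨x, hx⟩ := Finset.nonempty_iff_ne_empty.2 hdV
            have hxV := (Finset.mem_inter.1 hx).1
            have hxJ := (Finset.mem_inter.1 hx).2
            have hJdU : J ∩ (I₁ ∪ I₂) = ∅ := by
              apply Finset.eq_empty_of_forall_notMem
              intro y hy
              have hyJ := (Finset.mem_inter.1 hy).1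
              rcases Finset.mem_union.1 (Finset.mem_inter.1 hy).2 with h | h
              · exact Finset.notMem_empty y (hdJ1 ▸ Finset.mem_inter.2 ⟨hyJ, h⟩)
              · exact Finset.notMem_empty y (hdJ2 ▸ Finset.mem_inter.2 ⟨hyJ, h⟩)
            have hxU : x ∉ I₁ ∪ I₂ := fun h =>
              Finset.notMem_empty x (hJdU ▸ Finset.mem_inter.2 ⟨hxJ, h⟩)
            have hxsup : x ∈ F₀.sup id := (Finset.mem_union.1 hxV).resolve_left hxU
            have htriK : ∀ K ∈ F₀, K ⊆ J ∨ K ∩ J = ∅ := by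
              intro K hK
              rcases hpN K (hF₀N hK) J hJ with h | h | h
              · exact Or.inl h
              · exact absurd (h.trans ((Finset.le_sup (f := id) hK).trans
                  Finset.subset_union_right)) h1
              · exact Or.inr h
            have hJB := hNB J hJ
            have hVJB : ((I₁ ∪ I₂) ∪ F₀.sup id) ∪ J ∈ B := by
              apply hB.2.1 _ hVB _ hJB
              exact ⟨x, Finset.mem_inter.2 ⟨hxV, hxJ⟩⟩
            have hJD : J ∉ F₀.filter (fun K => K ∩ J = ∅) := by
              intro h
              have h' := (Finset.mem_filter.1 h).2
              rw [Finset.inter_self] at h'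
              exact (hNne J hJ).ne_empty h'
            have hsupeq : (I₁ ∪ I₂) ∪ (insert J (F₀.filter (fun K => K ∩ J = ∅))).sup id
                = ((I₁ ∪ I₂) ∪ F₀.sup id) ∪ J := by
              apply Finset.Subset.antisymm
              · intro y hy
                rcases Finset.mem_union.1 hy with hy' | hy'
                · exact Finset.mem_union_left _ (Finset.mem_union_left _ hy')
                · obtain ⟨K, hK, hyK⟩ := Finset.mem_sup.1 hy'
                  rcases Finset.mem_insert.1 hK with rfl | hK'
                  · exact Finset.mem_union_right _ hyK
                  · exact Finset.mem_union_left _ (Finset.mem_union_right _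
                      (Finset.le_sup (f := id) (Finset.mem_filter.1 hK').1 hyK))
              · intro y hy
                rcases Finset.mem_union.1 hy with hy' | hy'
                · rcases Finset.mem_union.1 hy' with hy'' | hy''
                  · exact Finset.mem_union_left _ hy''
                  · obtain ⟨K, hK, hyK⟩ := Finset.mem_sup.1 hy''
                    rcases htriK K hK with h | h
                    · exact Finset.mem_union_right _ (Finset.mem_sup.2
                        ⟨J, Finset.mem_insert_self _ _, h hyK⟩)
                    · exact Finset.mem_union_right _ (Finset.mem_sup.2
                        ⟨K, Finset.mem_insert_of_mem (Finset.mem_filter.2 ⟨hK, h⟩), hyK⟩)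
                · exact Finset.mem_union_right _ (Finset.mem_sup.2
                    ⟨J, Finset.mem_insert_self _ _, hy'⟩)
            have hnew : insert J (F₀.filter (fun K => K ∩ J = ∅)) ∈ 𝒜 := by
              rw [h𝒜, Finset.mem_filter, Finset.mem_powerset]
              refine ⟨?_, ?_, ?_, ?_⟩
              · intro X hX
                rcases Finset.mem_insert.1 hX with rfl | hX'
                · exact hJ
                · exact hF₀N (Finset.mem_filter.1 hX').1
              · intro X hX Y hY hXY
                rcases Finset.mem_insert.1 hX with rfl | hX'
                · rcases Finset.mem_insert.1 hY with rfl | hY'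
                  · exact absurd rfl hXY
                  · rw [Finset.inter_comm]; exact (Finset.mem_filter.1 hY').2
                · rcases Finset.mem_insert.1 hY with rfl | hY'
                  · exact (Finset.mem_filter.1 hX').2
                  · exact hF₀disj X (Finset.mem_filter.1 hX').1 Y (Finset.mem_filter.1 hY').1 hXY
              · intro K hK
                rcases Finset.mem_insert.1 hK with rfl | hK'
                · exact hJdU
                · exact hF₀dU K (Finset.mem_filter.1 hK').1
              · rw [hsupeq]; exact hVJB
            have hle := hF₀max _ hnew
            rw [hsupeq] at hle
            have hlt : (((I₁ ∪ I₂) ∪ F₀.sup id)).card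
                < ((((I₁ ∪ I₂) ∪ F₀.sup id)) ∪ J).card := by
              apply Finset.card_lt_card
              constructor
              · exact Finset.subset_union_left
              · intro hcon
                obtain ⟨y, hyJ, hyV⟩ : ∃ y ∈ J, y ∉ (I₁ ∪ I₂) ∪ F₀.sup id := by
                  by_contra hcc
                  push_neg at hcc
                  exact h1 hcc
                exact hyV (hcon (Finset.mem_union_right _ hyJ))
            omega
        -- nestedness of insert V (insert I₁ N)
        have hnest : IsNested B (insert ((I₁ ∪ I₂) ∪ F₀.sup id) (insert I₁ N)) := by
          refine ⟨?_, ?_, ?_⟩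
          · intro X hX
            rcases Finset.mem_insert.1 hX with rfl | hX'
            · exact hmemsd _ hVB hVS
            rcases Finset.mem_insert.1 hX' with rfl | hX''
            · exact hmemsd _ hI₁ hI₁S
            · exact hN.1 hX''
          · apply pair_insert hp₁
            intro X hX
            rcases Finset.mem_insert.1 hX with rfl | hX'
            · exact Or.inr (Or.inl hI₁V)
            · exact cV X hX'
          · intro G hG hGcard hGdisj hGB
            have hVG : (I₁ ∪ I₂) ∪ F₀.sup id ∈ G := by
              by_contra hcon
              refine hf₁ G (fun X hX => ?_) hGcard hGdisj hGB
              rcases Finset.mem_insert.1 (hG hX) with rfl | h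
              · exact absurd hX hcon
              · exact h
            have hG'sub : ∀ X ∈ G.erase ((I₁ ∪ I₂) ∪ F₀.sup id),
                X ∈ insert I₁ N ∧ X ∩ ((I₁ ∪ I₂) ∪ F₀.sup id) = ∅ := by
              intro X hX
              have hXne := (Finset.mem_erase.1 hX).1
              have hXG := Finset.mem_of_mem_erase hX
              refine ⟨?_, hGdisj X hXG _ hVG hXne⟩
              rcases Finset.mem_insert.1 (hG hXG) with rfl | h
              · exact absurd rfl hXne
              · exact h
            have hG'N : ∀ X ∈ G.erase ((I₁ ∪ I₂) ∪ F₀.sup id), X ∈ N := by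
              intro X hX
              rcases Finset.mem_insert.1 (hG'sub X hX).1 with rfl | h
              · exfalso
                obtain ⟨y, hy⟩ := hBne _ hI₁
                exact Finset.notMem_empty y ((hG'sub X hX).2 ▸
                  Finset.mem_inter.2 ⟨hy, hI₁V hy⟩)
              · exact h
            have hG'ne : (G.erase ((I₁ ∪ I₂) ∪ F₀.sup id)).Nonempty := by
              obtain ⟨X, hX, Y, hY, hXY⟩ := Finset.one_lt_card.1 hGcard
              rcases eq_or_ne X ((I₁ ∪ I₂) ∪ F₀.sup id) with rfl | hXV
              · exact ⟨Y, Finset.mem_erase.2 ⟨fun h => hXY h.symm, hY⟩⟩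
              · exact ⟨X, Finset.mem_erase.2 ⟨hXV, hX⟩⟩
            have hGsup_eq : (I₁ ∪ I₂) ∪ (F₀ ∪ G.erase ((I₁ ∪ I₂) ∪ F₀.sup id)).sup id
                = G.sup id := by
              have hVe : G.sup id = ((I₁ ∪ I₂) ∪ F₀.sup id)
                  ⊔ (G.erase ((I₁ ∪ I₂) ∪ F₀.sup id)).sup id := by
                conv_lhs => rw [← Finset.insert_erase hVG]
                rw [Finset.sup_insert]
                rfl
              rw [hVe, Finset.sup_union]
              exact (Finset.union_assoc _ _ _).symm
            have hnew : F₀ ∪ G.erase ((I₁ ∪ I₂) ∪ F₀.sup id) ∈ 𝒜 := by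
              rw [h𝒜, Finset.mem_filter, Finset.mem_powerset]
              refine ⟨?_, ?_, ?_, ?_⟩
              · intro X hX
                rcases Finset.mem_union.1 hX with h | h
                · exact hF₀N h
                · exact hG'N X h
              · intro X hX Y hY hXY
                rcases Finset.mem_union.1 hX with hX' | hX' <;>
                  rcases Finset.mem_union.1 hY with hY' | hY'
                · exact hF₀disj X hX' Y hY' hXY
                · apply Finset.eq_empty_of_forall_notMem
                  intro y hy
                  exact Finset.notMem_empty y ((hG'sub Y hY').2 ▸ Finset.mem_inter.2
                    ⟨(Finset.mem_inter.1 hy).2, Finset.mem_union_right _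
                      (Finset.le_sup (f := id) hX' (Finset.mem_inter.1 hy).1)⟩)
                · apply Finset.eq_empty_of_forall_notMem
                  intro y hy
                  exact Finset.notMem_empty y ((hG'sub X hX').2 ▸ Finset.mem_inter.2
                    ⟨(Finset.mem_inter.1 hy).1, Finset.mem_union_right _
                      (Finset.le_sup (f := id) hY' (Finset.mem_inter.1 hy).2)⟩)
                · exact hGdisj X (Finset.mem_of_mem_erase hX') Y (Finset.mem_of_mem_erase hY') hXY
              · intro K hK
                rcases Finset.mem_union.1 hK with h | h
                · exact hF₀dU K h
                · apply Finset.eq_empty_of_forall_notMem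
                  intro y hy
                  exact Finset.notMem_empty y ((hG'sub K h).2 ▸ Finset.mem_inter.2
                    ⟨(Finset.mem_inter.1 hy).1, Finset.mem_union_left _
                      (Finset.mem_inter.1 hy).2⟩)
              · rw [hGsup_eq]; exact hGB
            have hle := hF₀max _ hnew
            rw [hGsup_eq] at hle
            have hlt : (((I₁ ∪ I₂) ∪ F₀.sup id)).card < (G.sup id).card := by
              apply Finset.card_lt_card
              constructor
              · exact Finset.le_sup (f := id) hVG
              · intro hcon
                obtain ⟨X₁, hX₁⟩ := hG'ne
                obtain ⟨y, hy⟩ := hNne X₁ (hG'N X₁ hX₁)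
                exact Finset.notMem_empty y ((hG'sub X₁ hX₁).2 ▸ Finset.mem_inter.2
                  ⟨hy, hcon (Finset.le_sup (f := id) (Finset.mem_of_mem_erase hX₁) hy)⟩)
            omega
        rcases Finset.mem_insert.1 (mem_of_insert_nested hmax₁ hnest) with h | h
        · exact absurd (h ▸ hI₂V) hn21
        · exact h
      -- the relation
      refine ⟨fun J => (if J = I₁ ∩ I₂ then (-1:ℝ) else 0) + (if J ∈ F₀ then (1:ℝ) else 0) +
        (if J = (I₁ ∪ I₂) ∪ F₀.sup id ∧ (I₁ ∪ I₂) ∪ F₀.sup id ≠ Finset.Icc 1 (n + 1)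
          then (-1:ℝ) else 0), ?_, ?_⟩
      · have hterm : ∀ J ∈ N, ((if J = I₁ ∩ I₂ then (-1:ℝ) else 0) + (if J ∈ F₀ then (1:ℝ) else 0) +
            (if J = (I₁ ∪ I₂) ∪ F₀.sup id ∧ (I₁ ∪ I₂) ∪ F₀.sup id ≠ Finset.Icc 1 (n + 1)
              then (-1:ℝ) else 0)) • eSet n J
            = (if J = I₁ ∩ I₂ then (-1:ℝ) else 0) • eSet n J
              + (if J ∈ F₀ then (1:ℝ) else 0) • eSet n J
              + (if J = (I₁ ∪ I₂) ∪ F₀.sup id ∧ (I₁ ∪ I₂) ∪ F₀.sup id ≠ Finset.Icc 1 (n + 1)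
                  then (-1:ℝ) else 0) • eSet n J := by
          intro J _
          rw [add_smul, add_smul]
        rw [Finset.sum_congr rfl hterm, Finset.sum_add_distrib, Finset.sum_add_distrib,
          sum_ite_eq_smul N hPN (-1) (eSet n), sum_indic_smul N F₀ hF₀N (eSet n)]
        by_cases hVS : (I₁ ∪ I₂) ∪ F₀.sup id = Finset.Icc 1 (n + 1)
        · have hz : ∀ J ∈ N, (if J = (I₁ ∪ I₂) ∪ F₀.sup id ∧ (I₁ ∪ I₂) ∪ F₀.sup id ≠ Finset.Icc 1 (n + 1)
              then (-1:ℝ) else 0) • eSet n J = 0 := by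
            intro J _
            rw [if_neg (by tauto), zero_smul]
          rw [Finset.sum_congr rfl hz, Finset.sum_const_zero, add_zero]
          have h0 : eSet n ((I₁ ∪ I₂) ∪ F₀.sup id) = 0 := by rw [hVS]; exact eSet_S n
          rw [hdecompsum] at h0
          rw [hPsum, neg_one_smul]
          rw [show eSet n (I₁ ∪ I₂) + eSet n (I₁ ∩ I₂) + (-eSet n (I₁ ∩ I₂) + ∑ J ∈ F₀, eSet n J)
            = eSet n (I₁ ∪ I₂) + ∑ J ∈ F₀, eSet n J by abel]
          exact h0
        · have hVN : ((I₁ ∪ I₂) ∪ F₀.sup id) ∈ N := hVa.resolve_left hVS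
          have hz : ∀ J ∈ N, (if J = (I₁ ∪ I₂) ∪ F₀.sup id ∧ (I₁ ∪ I₂) ∪ F₀.sup id ≠ Finset.Icc 1 (n + 1)
              then (-1:ℝ) else 0) • eSet n J
              = (if J = (I₁ ∪ I₂) ∪ F₀.sup id then (-1:ℝ) else 0) • eSet n J := by
            intro J _
            by_cases h : J = (I₁ ∪ I₂) ∪ F₀.sup id
            · rw [if_pos ⟨h, hVS⟩, if_pos h]
            · rw [if_neg (fun hc => h hc.1), if_neg h]
          rw [Finset.sum_congr rfl hz, sum_ite_eq_smul N hVN (-1) (eSet n)]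
          rw [hPsum, neg_one_smul, neg_one_smul, hdecompsum]
          abel
      · rw [Finset.sum_add_distrib, Finset.sum_add_distrib,
          sum_ite_eq_const N hPN (-1), sum_indic_card N F₀ hF₀N]
        have h3 : (0:ℝ) ≤ (F₀.card : ℝ) := Nat.cast_nonneg _
        have h2 : (-1:ℝ) ≤ ∑ J ∈ N, (if J = (I₁ ∪ I₂) ∪ F₀.sup id ∧
            (I₁ ∪ I₂) ∪ F₀.sup id ≠ Finset.Icc 1 (n + 1) then (-1:ℝ) else 0) := by
          by_cases hVS : (I₁ ∪ I₂) ∪ F₀.sup id = Finset.Icc 1 (n + 1)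
          · have hz : ∀ J ∈ N, (if J = (I₁ ∪ I₂) ∪ F₀.sup id ∧ (I₁ ∪ I₂) ∪ F₀.sup id ≠ Finset.Icc 1 (n + 1)
                then (-1:ℝ) else 0) = 0 := by
              intro J _
              rw [if_neg (by tauto)]
            rw [Finset.sum_congr rfl hz, Finset.sum_const_zero]
            norm_num
          · have hVN : ((I₁ ∪ I₂) ∪ F₀.sup id) ∈ N := hVa.resolve_left hVS
            have hz : ∀ J ∈ N, (if J = (I₁ ∪ I₂) ∪ F₀.sup id ∧ (I₁ ∪ I₂) ∪ F₀.sup id ≠ Finset.Icc 1 (n + 1)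
                then (-1:ℝ) else 0) = (if J = (I₁ ∪ I₂) ∪ F₀.sup id then (-1:ℝ) else 0) := by
              intro J _
              by_cases h : J = (I₁ ∪ I₂) ∪ F₀.sup id
              · rw [if_pos ⟨h, hVS⟩, if_pos h]
              · rw [if_neg (fun hc => h hc.1), if_neg h]
            rw [Finset.sum_congr rfl hz, sum_ite_eq_const N hVN (-1)]
        linarith
    · --------------------------------------------------------------
      -- SUBCASE (ii) : I₁ ∪ I₂ = S , at most 2 maximal pieces in B|_P
      --------------------------------------------------------------
      have hRdef : ∀ X, X ∈ restrict B (I₁ ∩ I₂) ↔ X ∈ B ∧ X ⊆ I₁ ∩ I₂ := by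
        intro X; rw [restrict, Finset.mem_filter]
      have hQdef : ∀ Q, Q ∈ Bmax (restrict B (I₁ ∩ I₂)) ↔
          Q ∈ restrict B (I₁ ∩ I₂) ∧ ∀ L ∈ restrict B (I₁ ∩ I₂), Q ⊆ L → Q = L := by
        intro Q; rw [Bmax, Finset.mem_filter]
      have hQB : ∀ Q ∈ Bmax (restrict B (I₁ ∩ I₂)), Q ∈ B ∧ Q ⊆ I₁ ∩ I₂ := fun Q hQ =>
        (hRdef Q).1 ((hQdef Q).1 hQ).1
      have hcover : ∀ J ∈ restrict B (I₁ ∩ I₂), ∃ Q ∈ Bmax (restrict B (I₁ ∩ I₂)), J ⊆ Q := by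
        intro J hJ
        obtain ⟨K, hK, hJK, hKmax⟩ := exists_maximal_above (restrict B (I₁ ∩ I₂)) hJ
        exact ⟨K, (hQdef K).2 ⟨hK, hKmax⟩, hJK⟩
      have hQdisj : ∀ Q ∈ Bmax (restrict B (I₁ ∩ I₂)), ∀ Q' ∈ Bmax (restrict B (I₁ ∩ I₂)),
          Q ≠ Q' → Q ∩ Q' = ∅ := by
        intro Q hQ Q' hQ' hne'
        by_contra hd
        have hint : (Q ∩ Q').Nonempty := Finset.nonempty_iff_ne_empty.2 hd
        have hQB' := hQB Q hQ
        have hQ'B := hQB Q' hQ'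
        have hun : Q ∪ Q' ∈ B := hB.2.1 Q hQB'.1 Q' hQ'B.1 hint
        have hunR : Q ∪ Q' ∈ restrict B (I₁ ∩ I₂) :=
          (hRdef _).2 ⟨hun, Finset.union_subset hQB'.2 hQ'B.2⟩
        have h1 := ((hQdef Q).1 hQ).2 _ hunR Finset.subset_union_left
        have h2 := ((hQdef Q').1 hQ').2 _ hunR Finset.subset_union_right
        exact hne' (h1.trans h2.symm)
      have hQcover : ∀ x ∈ I₁ ∩ I₂, ∃ Q ∈ Bmax (restrict B (I₁ ∩ I₂)), x ∈ Q := by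
        intro x hx
        have hxS : x ∈ Finset.Icc 1 (n + 1) := hBsub I₁ hI₁ (Finset.mem_inter.1 hx).1
        have hsingR : ({x} : Finset ℕ) ∈ restrict B (I₁ ∩ I₂) :=
          (hRdef _).2 ⟨hB.2.2 x hxS, Finset.singleton_subset_iff.2 hx⟩
        obtain ⟨Q, hQ, hsub⟩ := hcover _ hsingR
        exact ⟨Q, hQ, hsub (Finset.mem_singleton_self x)⟩
      have hPsup' : (Bmax (restrict B (I₁ ∩ I₂))).sup id = I₁ ∩ I₂ := by
        apply Finset.Subset.antisymm
        · intro y hy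
          obtain ⟨Q, hQ, hyQ⟩ := Finset.mem_sup.1 hy
          exact (hQB Q hQ).2 hyQ
        · intro y hy
          obtain ⟨Q, hQ, hyQ⟩ := hQcover y hy
          exact Finset.mem_sup.2 ⟨Q, hQ, hyQ⟩
      -- every maximal piece lies in N
      have hQN : ∀ Q ∈ Bmax (restrict B (I₁ ∩ I₂)), Q ∈ N := by
        intro Q hQ
        obtain ⟨hQB', hQP⟩ := hQB Q hQ
        have hQne := hBne Q hQB'
        have hQI₁ : Q ⊆ I₁ := hQP.trans hPI₁
        have hQI₂ : Q ⊆ I₂ := hQP.trans hPI₂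
        have hQS : Q ≠ Finset.Icc 1 (n + 1) := by
          intro h
          exact hI₁S (Finset.Subset.antisymm (hBsub I₁ hI₁) (h ▸ hQI₁))
        have cQ : ∀ J ∈ N, Q ⊆ J ∨ J ⊆ Q ∨ Q ∩ J = ∅ := by
          intro J hJ
          by_cases hd : Q ∩ J = ∅
          · exact Or.inr (Or.inr hd)
          obtain ⟨x, hx⟩ := Finset.nonempty_iff_ne_empty.2 hd
          have hxQ := (Finset.mem_inter.1 hx).1
          have hxJ := (Finset.mem_inter.1 hx).2
          rcases t1 J hJ with h1 | h1 | h1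
          · rcases t2 J hJ with h2 | h2 | h2
            · have hJR : J ∈ restrict B (I₁ ∩ I₂) :=
                (hRdef _).2 ⟨hNB J hJ, Finset.subset_inter h1 h2⟩
              obtain ⟨Q', hQ', hJQ'⟩ := hcover J hJR
              rcases eq_or_ne Q Q' with rfl | hQQ'
              · exact Or.inr (Or.inl hJQ')
              · exact absurd (hQdisj Q hQ Q' hQ' hQQ' ▸
                  Finset.mem_inter.2 ⟨hxQ, hJQ' hxJ⟩) (Finset.notMem_empty x)
            · exact Or.inl (hQI₂.trans h2)
            · exact absurd (h2 ▸ Finset.mem_inter.2 ⟨hxJ, hQI₂ hxQ⟩) (Finset.notMem_empty x)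
          · exact Or.inl (hQI₁.trans h1)
          · exact absurd (h1 ▸ Finset.mem_inter.2 ⟨hxJ, hQI₁ hxQ⟩) (Finset.notMem_empty x)
        have hQnest : IsNested B (insert Q (insert I₁ N)) := by
          refine ⟨?_, ?_, ?_⟩
          · intro X hX
            rcases Finset.mem_insert.1 hX with rfl | hX'
            · exact hmemsd _ hQB' hQS
            rcases Finset.mem_insert.1 hX' with rfl | hX''
            · exact hmemsd _ hI₁ hI₁S
            · exact hN.1 hX''
          · apply pair_insert hp₁
            intro X hX
            rcases Finset.mem_insert.1 hX with rfl | hX'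
            · exact Or.inl hQI₁
            · exact cQ X hX'
          · intro G hG hGcard hGdisj hGB
            have hQG : Q ∈ G := by
              by_contra hcon
              refine hf₁ G (fun X hX => ?_) hGcard hGdisj hGB
              rcases Finset.mem_insert.1 (hG hX) with rfl | h
              · exact absurd hX hcon
              · exact h
            have hG'sub : ∀ X ∈ G.erase Q, X ∈ N ∧ X ∩ Q = ∅ := by
              intro X hX
              have hXne := (Finset.mem_erase.1 hX).1
              have hXG := Finset.mem_of_mem_erase hX
              have hXd : X ∩ Q = ∅ := hGdisj X hXG _ hQG hXne
              refine ⟨?_, hXd⟩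
              rcases Finset.mem_insert.1 (hG hXG) with rfl | h
              · exact absurd rfl hXne
              rcases Finset.mem_insert.1 h with rfl | h'
              · exfalso
                obtain ⟨y, hy⟩ := hQne
                exact Finset.notMem_empty y (hXd ▸ Finset.mem_inter.2 ⟨hQI₁ hy, hy⟩)
              · exact h'
            have hclass : ∀ X ∈ G.erase Q,
                (X ⊆ I₁ ∧ X ∩ I₂ = ∅) ∨ X ∩ I₁ = ∅ ∨ (X ⊆ I₁ ∧ X ⊆ I₂) := by
              intro X hX
              obtain ⟨hXN, hXd⟩ := hG'sub X hX
              rcases t1 X hXN with h1 | h1 | h1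
              · rcases t2 X hXN with h2 | h2 | h2
                · exact Or.inr (Or.inr ⟨h1, h2⟩)
                · exfalso
                  obtain ⟨y, hy⟩ := hQne
                  exact Finset.notMem_empty y (hXd ▸ Finset.mem_inter.2 ⟨h2 (hQI₂ hy), hy⟩)
                · exact Or.inl ⟨h1, h2⟩
              · exfalso
                obtain ⟨y, hy⟩ := hQne
                exact Finset.notMem_empty y (hXd ▸ Finset.mem_inter.2 ⟨h1 (hQI₁ hy), hy⟩)
              · exact Or.inr (Or.inl h1)
            by_cases hcase : ((G.erase Q).filter (fun X => X ∩ I₁ = ∅)).Nonempty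
            · -- contradiction with hf₁
              have hI₁D : I₁ ∉ (G.erase Q).filter (fun X => X ∩ I₁ = ∅) := by
                intro h
                have h' := (Finset.mem_filter.1 h).2
                rw [Finset.inter_self] at h'
                exact (hBne I₁ hI₁).ne_empty h'
              refine hf₁ (insert I₁ ((G.erase Q).filter (fun X => X ∩ I₁ = ∅))) ?_ ?_ ?_ ?_
              · intro X hX
                rcases Finset.mem_insert.1 hX with rfl | hX'
                · exact Finset.mem_insert_self _ _
                · exact Finset.mem_insert_of_mem (hG'sub X (Finset.mem_filter.1 hX').1).1
              · rw [Finset.card_insert_of_notMem hI₁D]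
                have := Finset.card_pos.2 hcase
                omega
              · intro X hX Y hY hXY
                rcases Finset.mem_insert.1 hX with rfl | hX'
                · rcases Finset.mem_insert.1 hY with rfl | hY'
                  · exact absurd rfl hXY
                  · rw [Finset.inter_comm]; exact (Finset.mem_filter.1 hY').2
                · rcases Finset.mem_insert.1 hY with rfl | hY'
                  · exact (Finset.mem_filter.1 hX').2
                  · exact hGdisj X (Finset.mem_of_mem_erase (Finset.mem_filter.1 hX').1) Y
                      (Finset.mem_of_mem_erase (Finset.mem_filter.1 hY').1) hXY
              · have hGI₁B : G.sup id ∪ I₁ ∈ B := by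
                  apply hB.2.1 _ hGB _ hI₁
                  obtain ⟨y, hy⟩ := hQne
                  exact ⟨y, Finset.mem_inter.2 ⟨Finset.le_sup (f := id) hQG hy, hQI₁ hy⟩⟩
                have heq2 : (insert I₁ ((G.erase Q).filter (fun X => X ∩ I₁ = ∅))).sup id
                    = G.sup id ∪ I₁ := by
                  apply Finset.Subset.antisymm
                  · intro y hy
                    obtain ⟨K, hK, hyK⟩ := Finset.mem_sup.1 hy
                    rcases Finset.mem_insert.1 hK with rfl | hK'
                    · exact Finset.mem_union_right _ hyK
                    · exact Finset.mem_union_left _ (Finset.le_sup (f := id)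
                        (Finset.mem_of_mem_erase (Finset.mem_filter.1 hK').1) hyK)
                  · intro y hy
                    rcases Finset.mem_union.1 hy with hy' | hy'
                    · obtain ⟨K, hK, hyK⟩ := Finset.mem_sup.1 hy'
                      rcases eq_or_ne K Q with rfl | hKQ
                      · exact Finset.mem_sup.2 ⟨I₁, Finset.mem_insert_self _ _, hQI₁ hyK⟩
                      · have hKe : K ∈ G.erase Q := Finset.mem_erase.2 ⟨hKQ, hK⟩
                        rcases hclass K hKe with ⟨h1, _⟩ | h1 | ⟨h1, _⟩
                        · exact Finset.mem_sup.2 ⟨I₁, Finset.mem_insert_self _ _, h1 hyK⟩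
                        · exact Finset.mem_sup.2 ⟨K, Finset.mem_insert_of_mem
                            (Finset.mem_filter.2 ⟨hKe, h1⟩), hyK⟩
                        · exact Finset.mem_sup.2 ⟨I₁, Finset.mem_insert_self _ _, h1 hyK⟩
                    · exact Finset.mem_sup.2 ⟨I₁, Finset.mem_insert_self _ _, hy'⟩
                rw [heq2]; exact hGI₁B
            · by_cases hcase2 : ((G.erase Q).filter (fun X => X ∩ I₂ = ∅)).Nonempty
              · -- contradiction with hf₂
                have hI₂D : I₂ ∉ (G.erase Q).filter (fun X => X ∩ I₂ = ∅) := by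
                  intro h
                  have h' := (Finset.mem_filter.1 h).2
                  rw [Finset.inter_self] at h'
                  exact (hBne I₂ hI₂).ne_empty h'
                refine hf₂ (insert I₂ ((G.erase Q).filter (fun X => X ∩ I₂ = ∅))) ?_ ?_ ?_ ?_
                · intro X hX
                  rcases Finset.mem_insert.1 hX with rfl | hX'
                  · exact Finset.mem_insert_self _ _
                  · exact Finset.mem_insert_of_mem (hG'sub X (Finset.mem_filter.1 hX').1).1
                · rw [Finset.card_insert_of_notMem hI₂D]
                  have := Finset.card_pos.2 hcase2
                  omega
                · intro X hX Y hY hXY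
                  rcases Finset.mem_insert.1 hX with rfl | hX'
                  · rcases Finset.mem_insert.1 hY with rfl | hY'
                    · exact absurd rfl hXY
                    · rw [Finset.inter_comm]; exact (Finset.mem_filter.1 hY').2
                  · rcases Finset.mem_insert.1 hY with rfl | hY'
                    · exact (Finset.mem_filter.1 hX').2
                    · exact hGdisj X (Finset.mem_of_mem_erase (Finset.mem_filter.1 hX').1) Y
                        (Finset.mem_of_mem_erase (Finset.mem_filter.1 hY').1) hXY
                · have hGI₂B : G.sup id ∪ I₂ ∈ B := by
                    apply hB.2.1 _ hGB _ hI₂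
                    obtain ⟨y, hy⟩ := hQne
                    exact ⟨y, Finset.mem_inter.2 ⟨Finset.le_sup (f := id) hQG hy, hQI₂ hy⟩⟩
                  have heq2 : (insert I₂ ((G.erase Q).filter (fun X => X ∩ I₂ = ∅))).sup id
                      = G.sup id ∪ I₂ := by
                    apply Finset.Subset.antisymm
                    · intro y hy
                      obtain ⟨K, hK, hyK⟩ := Finset.mem_sup.1 hy
                      rcases Finset.mem_insert.1 hK with rfl | hK'
                      · exact Finset.mem_union_right _ hyK
                      · exact Finset.mem_union_left _ (Finset.le_sup (f := id)
                          (Finset.mem_of_mem_erase (Finset.mem_filter.1 hK').1) hyK)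
                    · intro y hy
                      rcases Finset.mem_union.1 hy with hy' | hy'
                      · obtain ⟨K, hK, hyK⟩ := Finset.mem_sup.1 hy'
                        rcases eq_or_ne K Q with rfl | hKQ
                        · exact Finset.mem_sup.2 ⟨I₂, Finset.mem_insert_self _ _, hQI₂ hyK⟩
                        · have hKe : K ∈ G.erase Q := Finset.mem_erase.2 ⟨hKQ, hK⟩
                          rcases hclass K hKe with ⟨_, h1⟩ | h1 | ⟨_, h1⟩
                          · exact Finset.mem_sup.2 ⟨K, Finset.mem_insert_of_mem
                              (Finset.mem_filter.2 ⟨hKe, h1⟩), hyK⟩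
                          · exact absurd ⟨K, Finset.mem_filter.2 ⟨hKe, h1⟩⟩ hcase
                          · exact Finset.mem_sup.2 ⟨I₂, Finset.mem_insert_self _ _, h1 hyK⟩
                      · exact Finset.mem_sup.2 ⟨I₂, Finset.mem_insert_self _ _, hy'⟩
                  rw [heq2]; exact hGI₂B
              · -- all pieces inside P : contradiction with maximality of Q
                have hG'P : ∀ X ∈ G.erase Q, X ⊆ I₁ ∩ I₂ := by
                  intro X hX
                  rcases hclass X hX with ⟨_, h1⟩ | h1 | ⟨h1, h2⟩
                  · exact absurd ⟨X, Finset.mem_filter.2 ⟨hX, h1⟩⟩ hcase2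
                  · exact absurd ⟨X, Finset.mem_filter.2 ⟨hX, h1⟩⟩ hcase
                  · exact Finset.subset_inter h1 h2
                have hGsupP : G.sup id ⊆ I₁ ∩ I₂ := by
                  intro y hy
                  obtain ⟨K, hK, hyK⟩ := Finset.mem_sup.1 hy
                  rcases eq_or_ne K Q with rfl | hKQ
                  · exact hQP hyK
                  · exact hG'P K (Finset.mem_erase.2 ⟨hKQ, hK⟩) hyK
                have hGR : G.sup id ∈ restrict B (I₁ ∩ I₂) := (hRdef _).2 ⟨hGB, hGsupP⟩
                obtain ⟨Q'', hQ'', hsub''⟩ := hcover _ hGR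
                have hQQ'' : Q = Q'' := ((hQdef Q).1 hQ).2 _ ((hQdef Q'').1 hQ'').1
                  ((Finset.le_sup (f := id) hQG).trans hsub'')
                have hGsupQ : G.sup id ⊆ Q := hQQ'' ▸ hsub''
                have hG'ne : (G.erase Q).Nonempty := by
                  obtain ⟨X, hX, Y, hY, hXY⟩ := Finset.one_lt_card.1 hGcard
                  rcases eq_or_ne X Q with rfl | hXQ
                  · exact ⟨Y, Finset.mem_erase.2 ⟨fun h => hXY h.symm, hY⟩⟩
                  · exact ⟨X, Finset.mem_erase.2 ⟨hXQ, hX⟩⟩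
                obtain ⟨X₁, hX₁⟩ := hG'ne
                obtain ⟨y, hy⟩ := hNne X₁ (hG'sub X₁ hX₁).1
                exact Finset.notMem_empty y ((hG'sub X₁ hX₁).2 ▸ Finset.mem_inter.2
                  ⟨hy, hGsupQ (Finset.le_sup (f := id) (Finset.mem_of_mem_erase hX₁) hy)⟩)
        rcases Finset.mem_insert.1 (mem_of_insert_nested hmax₁ hQnest) with h | h
        · exact absurd (h ▸ hQI₂) hn12
        · exact h
      -- the relation
      have hQsubN : Bmax (restrict B (I₁ ∩ I₂)) ⊆ N := fun Q hQ => hQN Q hQ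
      refine ⟨fun J => (if J ∈ Bmax (restrict B (I₁ ∩ I₂)) then (-1:ℝ) else 0), ?_, ?_⟩
      · have hterm : ∀ J ∈ N, (if J ∈ Bmax (restrict B (I₁ ∩ I₂)) then (-1:ℝ) else 0) • eSet n J
            = -((if J ∈ Bmax (restrict B (I₁ ∩ I₂)) then (1:ℝ) else 0) • eSet n J) := by
          intro J _
          by_cases h : J ∈ Bmax (restrict B (I₁ ∩ I₂)) <;> simp [h]
        rw [Finset.sum_congr rfl hterm, Finset.sum_neg_distrib,
          sum_indic_smul N _ hQsubN (eSet n)]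
        have hPe : ∑ Q ∈ Bmax (restrict B (I₁ ∩ I₂)), eSet n Q = eSet n (I₁ ∩ I₂) := by
          rw [← eSet_sup n _ hQdisj, hPsup']
        rw [hPe]
        have hPsum : eSet n I₁ + eSet n I₂ = eSet n (I₁ ∪ I₂) + eSet n (I₁ ∩ I₂) :=
          (eSet_union_inter n I₁ I₂).symm
        rw [hPsum]
        have hU : eSet n (I₁ ∪ I₂) = 0 := by rw [hU₀S]; exact eSet_S n
        rw [hU]
        abel
      · have hterm : ∀ J ∈ N, (if J ∈ Bmax (restrict B (I₁ ∩ I₂)) then (-1:ℝ) else 0)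
            = -(if J ∈ Bmax (restrict B (I₁ ∩ I₂)) then (1:ℝ) else 0) := by
          intro J _
          by_cases h : J ∈ Bmax (restrict B (I₁ ∩ I₂)) <;> simp [h]
        rw [Finset.sum_congr rfl hterm, Finset.sum_neg_distrib, sum_indic_card N _ hQsubN]
        have hc : ((Bmax (restrict B (I₁ ∩ I₂))).card : ℝ) ≤ 2 := by exact_mod_cast hQ2
        linarith
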